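/- arXiv:1602.06598 — 5 statements merged into one kernel-verified Lean document; each statement's English description precedes it below -/
import Mathlib

section
/- Let X be a nonnegative random variable on a probability space (Ω, 𝒜, P), and let 0 ≤ T_th ≤ T_max < ∞ be real numbers. Then E[log₂(1 + min(X, T_max)) · 1_{X ≥ T_th}] = log₂(1 + T_th) · P(X ≥ T_th) + (1/ln 2) · ∫_{T_th}^{T_max} P(X > y)/(1 + y) dy. -/
open MeasureTheory Real Set

lemma int_inv_aux (a b : ℝ) (h0 : (-1:ℝ) < a) (hab : a ≤ b) :
    ∫ y in a..b, (1 + y)⁻¹ = Real.log (1 + b) - Real.log (1 + a) := by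
  have h1 : (0:ℝ) < 1 + a := by linarith
  have h2 : (0:ℝ) < 1 + b := by linarith
  have h := intervalIntegral.integral_comp_add_left (a := a) (b := b) (fun x : ℝ => x⁻¹) 1
  rw [h, integral_inv_of_pos h1 h2, Real.log_div h2.ne' h1.ne']

/-- **Effective rate identity with a finite MCS cap.**
For a nonnegative random variable `X` on a probability space `(Ω, 𝒜, P)` and
thresholds `0 ≤ T_th ≤ T_max < ∞`,
`E[log₂(1 + min(X, T_max)) · 1_{X ≥ T_th}]
  = log₂(1 + T_th) · P(X ≥ T_th) + (1/ln 2) · ∫_{T_th}^{T_max} P(X > y)/(1 + y) dy`. -/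
theorem effective_rate_identity
    {Ω : Type*} [MeasurableSpace Ω] (P : Measure Ω) [IsProbabilityMeasure P]
    (X : Ω → ℝ) (hX : Measurable X) (hX0 : ∀ ω, 0 ≤ X ω)
    (Tth Tmax : ℝ) (hth : 0 ≤ Tth) (hmax : Tth ≤ Tmax) :
    ∫ ω, ({ω : Ω | Tth ≤ X ω}.indicator
        (fun ω => Real.logb 2 (1 + min (X ω) Tmax)) ω) ∂P
      = Real.logb 2 (1 + Tth) * (P {ω | Tth ≤ X ω}).toReal
        + (1 / Real.log 2) * ∫ y in Tth..Tmax, (P {ω | y < X ω}).toReal / (1 + y) := by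
  have hlog2 : Real.log 2 ≠ 0 := ne_of_gt (Real.log_pos one_lt_two)
  set A : Set Ω := {ω | Tth ≤ X ω} with hA
  have hAm : MeasurableSet A := measurableSet_le measurable_const hX
  set ν : Measure ℝ := volume.restrict (Ioc Tth Tmax) with hν
  haveI : IsFiniteMeasure ν := ⟨by
    rw [hν, Measure.restrict_apply_univ]
    exact measure_Ioc_lt_top⟩
  set F : Ω → ℝ → ℝ := fun ω y => if Tth < y ∧ y < X ω then (1 + y)⁻¹ else 0 with hFdef
  -- measurability and integrability on the product space
  have hFmeas : Measurable (fun p : Ω × ℝ => F p.1 p.2) := by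
    apply Measurable.ite
    · exact (measurableSet_lt measurable_const measurable_snd).inter
        (measurableSet_lt measurable_snd (hX.comp measurable_fst))
    · exact (measurable_const.add measurable_snd).inv
    · exact measurable_const
  have hFint : Integrable (fun p : Ω × ℝ => F p.1 p.2) (P.prod ν) := by
    refine (integrable_const (1:ℝ)).mono' hFmeas.aestronglyMeasurable
      (Filter.Eventually.of_forall ?_)
    rintro ⟨ω, y⟩
    simp only [hFdef]
    split_ifs with h
    · have hy : (0:ℝ) < 1 + y := by linarith [h.1]
      rw [Real.norm_eq_abs, abs_inv, abs_of_pos hy]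
      rw [inv_le_one_iff₀]
      right; linarith [h.1]
    · simp
  -- value of the inner integral on A
  have hG : ∀ ω ∈ A, ∫ y, F ω y ∂ν
      = Real.log (1 + min (X ω) Tmax) - Real.log (1 + Tth) := by
    intro ω hω
    have hω' : Tth ≤ X ω := hω
    have hF' : F ω = (Ioo Tth (X ω)).indicator (fun y => (1 + y)⁻¹) := by
      funext y
      simp [hFdef, Set.indicator_apply, Set.mem_Ioo]
    rw [hF', hν, integral_indicator measurableSet_Ioo,
      Measure.restrict_restrict measurableSet_Ioo]
    rcases le_or_gt (X ω) Tmax with h | h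
    · rw [min_eq_left h]
      have hset : Ioo Tth (X ω) ∩ Ioc Tth Tmax = Ioo Tth (X ω) := by
        refine inter_eq_left.mpr fun y hy => ⟨hy.1, le_trans hy.2.le h⟩
      rw [hset, ← integral_Ioc_eq_integral_Ioo, ← intervalIntegral.integral_of_le hω']
      exact int_inv_aux _ _ (by linarith) hω'
    · rw [min_eq_right h.le]
      have hset : Ioo Tth (X ω) ∩ Ioc Tth Tmax = Ioc Tth Tmax := by
        refine inter_eq_right.mpr fun y hy => ⟨hy.1, lt_of_le_of_lt hy.2 h⟩
      rw [hset, ← intervalIntegral.integral_of_le hmax]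
      exact int_inv_aux _ _ (by linarith) hmax
  have hGzero : ∀ ω ∉ A, ∫ y, F ω y ∂ν = 0 := by
    intro ω hω
    have hω' : X ω < Tth := lt_of_not_ge hω
    have : F ω = fun _ => (0:ℝ) := by
      funext y
      simp only [hFdef, ite_eq_right_iff]
      rintro ⟨h1, h2⟩
      exact absurd (h1.trans h2) (not_lt.mpr hω'.le)
    rw [this]
    simp
  -- pointwise decomposition
  have hpt : ∀ ω, A.indicator (fun ω => Real.logb 2 (1 + min (X ω) Tmax)) ω
      = A.indicator (fun _ => Real.logb 2 (1 + Tth)) ω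
        + (1 / Real.log 2) * ∫ y, F ω y ∂ν := by
    intro ω
    by_cases hω : ω ∈ A
    · rw [Set.indicator_of_mem hω, Set.indicator_of_mem hω, hG ω hω]
      rw [Real.logb, Real.logb]
      field_simp
      try ring
    · rw [Set.indicator_of_notMem hω, Set.indicator_of_notMem hω, hGzero ω hω]
      simp
  have hint1 : Integrable (A.indicator fun _ => Real.logb 2 (1 + Tth)) P :=
    (integrable_const _).indicator hAm
  have hint2 : Integrable (fun ω => ∫ y, F ω y ∂ν) P := hFint.integral_prod_left
  calc ∫ ω, A.indicator (fun ω => Real.logb 2 (1 + min (X ω) Tmax)) ω ∂P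
      = ∫ ω, (A.indicator (fun _ => Real.logb 2 (1 + Tth)) ω
          + (1 / Real.log 2) * ∫ y, F ω y ∂ν) ∂P :=
        integral_congr_ae (Filter.Eventually.of_forall hpt)
    _ = Real.logb 2 (1 + Tth) * (P A).toReal
          + (1 / Real.log 2) * ∫ ω, (∫ y, F ω y ∂ν) ∂P := by
        rw [integral_add hint1 (hint2.const_mul _), integral_indicator hAm,
          setIntegral_const, integral_const_mul, smul_eq_mul, mul_comm, measureReal_def]
    _ = Real.logb 2 (1 + Tth) * (P A).toReal
          + (1 / Real.log 2) * ∫ y in Tth..Tmax, (P {ω | y < X ω}).toReal / (1 + y) := by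
        congr 1
        rw [integral_integral_swap hFint, intervalIntegral.integral_of_le hmax, hν]
        congr 1
        refine setIntegral_congr_fun measurableSet_Ioc fun y hy => ?_
        have hFy : (fun ω => F ω y) = {ω | y < X ω}.indicator (fun _ => (1 + y)⁻¹) := by
          funext ω
          simp [hFdef, Set.indicator_apply, hy.1]
        rw [hFy, integral_indicator_const _ (measurableSet_lt measurable_const hX),
          smul_eq_mul, div_eq_mul_inv, measureReal_def]
end

section
/- For every positive integer N and every x > 0, the cumulative distribution function F_N of the normalized Gamma distribution with parameter N satisfies (1 − e^{−a_N x})^N ≤ F_N(x), where a_N = N·(N!)^{−1/N}. -/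
open MeasureTheory ProbabilityTheory Set

section AlzerAux

open Filter Topology

namespace AlzerAux

noncomputable def qf (a c t : ℝ) : ℝ :=
  Real.log (a * t) - c * t - Real.log (1 - Real.exp (-(a * t)))

noncomputable def qf' (a c t : ℝ) : ℝ :=
  a / (a * t) - c - a * Real.exp (-(a * t)) / (1 - Real.exp (-(a * t)))

noncomputable def qf'' (a t : ℝ) : ℝ :=
  -(a ^ 2 / (a * t) ^ 2) + a ^ 2 * Real.exp (-(a * t)) / (1 - Real.exp (-(a * t))) ^ 2

lemma expos {a t : ℝ} (ha : 0 < a) (ht : 0 < t) : 0 < 1 - Real.exp (-(a * t)) := by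
  have h : Real.exp (-(a * t)) < 1 := by
    rw [Real.exp_lt_one_iff]
    nlinarith
  linarith

lemma hasDerivAt_E {a t : ℝ} :
    HasDerivAt (fun s => 1 - Real.exp (-(a * s))) (a * Real.exp (-(a * t))) t := by
  have h1 : HasDerivAt (fun s : ℝ => a * s) a t := by
    simpa using (hasDerivAt_id t).const_mul a
  have hexp : HasDerivAt (fun s => Real.exp (-(a * s))) (Real.exp (-(a * t)) * (-a)) t :=
    h1.neg.exp
  have : HasDerivAt (fun s => 1 - Real.exp (-(a * s))) _ t := (hasDerivAt_const t (1 : ℝ)).sub hexp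
  convert this using 1
  ring

lemma hasDerivAt_qf {a c t : ℝ} (ha : 0 < a) (ht : 0 < t) :
    HasDerivAt (qf a c) (qf' a c t) t := by
  have hat : 0 < a * t := mul_pos ha ht
  have hE := expos ha ht
  have h1 : HasDerivAt (fun s : ℝ => a * s) a t := by
    simpa using (hasDerivAt_id t).const_mul a
  have hlog1 : HasDerivAt (fun s => Real.log (a * s)) (a / (a * t)) t := h1.log hat.ne'
  have hlog2 : HasDerivAt (fun s => Real.log (1 - Real.exp (-(a * s))))
      ((a * Real.exp (-(a * t))) / (1 - Real.exp (-(a * t)))) t :=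
    hasDerivAt_E.log hE.ne'
  have hc : HasDerivAt (fun s : ℝ => c * s) c t := by
    simpa using (hasDerivAt_id t).const_mul c
  exact (hlog1.sub hc).sub hlog2

lemma hasDerivAt_qf' {a c t : ℝ} (ha : 0 < a) (ht : 0 < t) :
    HasDerivAt (qf' a c) (qf'' a t) t := by
  have hat : 0 < a * t := mul_pos ha ht
  have hE := expos ha ht
  have h1 : HasDerivAt (fun s : ℝ => a * s) a t := by
    simpa using (hasDerivAt_id t).const_mul a
  have hfrac1 : HasDerivAt (fun s => a / (a * s))
      ((0 * (a * t) - a * a) / (a * t) ^ 2) t :=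
    (hasDerivAt_const t a).div h1 hat.ne'
  have hexp : HasDerivAt (fun s => Real.exp (-(a * s))) (Real.exp (-(a * t)) * (-a)) t :=
    h1.neg.exp
  have hnum : HasDerivAt (fun s => a * Real.exp (-(a * s)))
      (a * (Real.exp (-(a * t)) * (-a))) t := hexp.const_mul a
  have hfrac2 : HasDerivAt (fun s => a * Real.exp (-(a * s)) / (1 - Real.exp (-(a * s))))
      ((a * (Real.exp (-(a * t)) * (-a)) * (1 - Real.exp (-(a * t)))
        - a * Real.exp (-(a * t)) * (a * Real.exp (-(a * t)))) / (1 - Real.exp (-(a * t))) ^ 2) t :=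
    hnum.div hasDerivAt_E hE.ne'
  have h : HasDerivAt (qf' a c) _ t := (hfrac1.sub (hasDerivAt_const t c)).sub hfrac2
  convert h using 1
  rw [qf'']
  field_simp
  ring

lemma qf''_nonpos {a t : ℝ} (ha : 0 < a) (ht : 0 < t) : qf'' a t ≤ 0 := by
  have hE := expos ha ht
  have hat : 0 < a * t := mul_pos ha ht
  have hsinh : a * t < Real.exp (a * t / 2) - Real.exp (-(a * t) / 2) := by
    have h := Real.self_lt_sinh_iff.mpr (show 0 < a * t / 2 by linarith)
    rw [Real.sinh_eq] at h
    have he : -(a * t / 2) = -(a * t) / 2 := by ring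
    rw [he] at h
    linarith
  have hkey : a * t * Real.exp (-(a * t) / 2) ≤ 1 - Real.exp (-(a * t)) := by
    have hpos : (0 : ℝ) < Real.exp (-(a * t) / 2) := Real.exp_pos _
    have h2 := mul_lt_mul_of_pos_right hsinh hpos
    rw [sub_mul, ← Real.exp_add, ← Real.exp_add] at h2
    have e1 : a * t / 2 + -(a * t) / 2 = 0 := by ring
    have e2 : -(a * t) / 2 + -(a * t) / 2 = -(a * t) := by ring
    rw [e1, e2, Real.exp_zero] at h2
    linarith
  have hsq : (a * t) ^ 2 * Real.exp (-(a * t)) ≤ (1 - Real.exp (-(a * t))) ^ 2 := by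
    have h0 : 0 ≤ a * t * Real.exp (-(a * t) / 2) := by positivity
    have := mul_self_le_mul_self h0 hkey
    calc (a * t) ^ 2 * Real.exp (-(a * t))
        = (a * t * Real.exp (-(a * t) / 2)) * (a * t * Real.exp (-(a * t) / 2)) := by
          have hee : Real.exp (-(a * t) / 2) * Real.exp (-(a * t) / 2) = Real.exp (-(a * t)) := by
            rw [← Real.exp_add]; ring_nf
          linear_combination (-(a * t) ^ 2) * hee
      _ ≤ (1 - Real.exp (-(a * t))) * (1 - Real.exp (-(a * t))) := this
      _ = (1 - Real.exp (-(a * t))) ^ 2 := by ring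
  rw [qf'']
  have h3 : a ^ 2 * Real.exp (-(a * t)) / (1 - Real.exp (-(a * t))) ^ 2
      ≤ a ^ 2 / (a * t) ^ 2 := by
    rw [div_le_div_iff₀ (by positivity) (by positivity)]
    nlinarith [sq_nonneg a]
  linarith

lemma qf'_antitoneOn {a c : ℝ} (ha : 0 < a) : AntitoneOn (qf' a c) (Ioi 0) := by
  apply antitoneOn_of_deriv_nonpos (convex_Ioi 0)
  · intro t ht
    exact (hasDerivAt_qf' ha ht).continuousAt.continuousWithinAt
  · rw [interior_Ioi]
    intro t ht
    exact (hasDerivAt_qf' ha ht).differentiableAt.differentiableWithinAt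
  · rw [interior_Ioi]
    intro t ht
    rw [(hasDerivAt_qf' ha ht).deriv]
    exact qf''_nonpos ha ht

lemma qf_ge {a c t : ℝ} (ha : 0 < a) (ht : 0 < t) : -(c * t) ≤ qf a c t := by
  have hE := expos ha ht
  have hat : 0 < a * t := mul_pos ha ht
  have h1 : 1 - Real.exp (-(a * t)) ≤ a * t := by
    have := Real.add_one_le_exp (-(a * t))
    linarith
  have h2 : Real.log (1 - Real.exp (-(a * t))) ≤ Real.log (a * t) :=
    Real.log_le_log hE h1
  rw [qf]
  linarith

lemma qf_nonpos_propagate {a c x1 y : ℝ} (ha : 0 < a) (hx1 : 0 < x1)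
    (hq1 : qf a c x1 < 0) (hy : x1 < y) : qf a c y ≤ 0 := by
  by_contra hpos
  push_neg at hpos
  obtain ⟨ε, hε0, hεx1, hnum0⟩ : ∃ ε : ℝ, 0 < ε ∧ ε < x1 ∧ qf a c x1 - qf a c ε < 0 := by
    have hCpos : (0:ℝ) < |c| + 1 := by positivity
    set ε := min (x1 / 2) (-(qf a c x1) / (2 * (|c| + 1))) with hεdef
    have hε0 : 0 < ε := lt_min (by linarith) (div_pos (by linarith) (by positivity))
    have hεle : ε ≤ -(qf a c x1) / (2 * (|c| + 1)) := min_le_right _ _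
    have hqε : -(c * ε) ≤ qf a c ε := qf_ge ha hε0
    have hcε : c * ε ≤ (|c| + 1) * ε := by
      have h2 : c ≤ |c| + 1 := by have := le_abs_self c; linarith
      nlinarith
    have hCε : (|c| + 1) * ε ≤ -(qf a c x1) / 2 := by
      calc (|c| + 1) * ε ≤ (|c| + 1) * (-(qf a c x1) / (2 * (|c| + 1))) := by nlinarith
        _ = -(qf a c x1) / 2 := by field_simp
    exact ⟨ε, hε0, lt_of_le_of_lt (min_le_left _ _) (by linarith), by linarith⟩
  obtain ⟨ξ0, hξ0mem, hξ0⟩ := exists_hasDerivAt_eq_slope (qf a c) (qf' a c) hεx1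
    (fun t htmem => (hasDerivAt_qf ha (lt_of_lt_of_le hε0 htmem.1)).continuousAt.continuousWithinAt)
    (fun t htmem => hasDerivAt_qf ha (lt_trans hε0 htmem.1))
  obtain ⟨ξ1, hξ1mem, hξ1⟩ := exists_hasDerivAt_eq_slope (qf a c) (qf' a c) hy
    (fun t htmem => (hasDerivAt_qf ha (lt_of_lt_of_le hx1 htmem.1)).continuousAt.continuousWithinAt)
    (fun t htmem => hasDerivAt_qf ha (lt_trans hx1 htmem.1))
  have hs0 : qf' a c ξ0 < 0 := by
    rw [hξ0]
    apply div_neg_of_neg_of_pos hnum0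
    linarith
  have hs1 : 0 < qf' a c ξ1 := by
    rw [hξ1]
    apply div_pos (by linarith) (by linarith)
  have hle : qf' a c ξ1 ≤ qf' a c ξ0 :=
    qf'_antitoneOn ha (show ξ0 ∈ Ioi 0 from lt_trans hε0 hξ0mem.1)
      (show ξ1 ∈ Ioi 0 from lt_trans (lt_trans hε0 hξ0mem.1) (lt_trans hξ0mem.2 hξ1mem.1))
      (le_of_lt (lt_trans hξ0mem.2 hξ1mem.1))
  linarith


lemma pdf_closed_form {N : ℕ} (hN : 2 ≤ N) {a c t : ℝ}
    (hadef : a = (N : ℝ) * ((N.factorial : ℝ) ^ (-(1:ℝ) / (N:ℝ))))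
    (hcdef : c = ((N:ℝ) - a) / ((N:ℝ) - 1)) (ht : 0 < t) :
    gammaPDFReal (N:ℝ) (N:ℝ) t
      = (N:ℝ) * a * Real.exp (-(a * t)) * (a * t * Real.exp (-(c * t))) ^ (N - 1) := by
  have hN1 : 1 ≤ N := by omega
  have hN0 : (0:ℝ) < (N:ℝ) := by exact_mod_cast Nat.pos_of_ne_zero (by omega)
  have hNne1 : ((N:ℝ) - 1) ≠ 0 := by
    have : (2:ℝ) ≤ (N:ℝ) := by exact_mod_cast hN
    linarith
  have hfacpos : (0:ℝ) < (N.factorial : ℝ) := by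
    exact_mod_cast N.factorial_pos
  have ha : 0 < a := by
    rw [hadef]
    positivity
  have h1 : ((N - 1 : ℕ) : ℝ) = (N:ℝ) - 1 := by
    rw [Nat.cast_sub hN1, Nat.cast_one]
  have hGamma : Real.Gamma (N:ℝ) = ((N-1).factorial : ℝ) := by
    have h2 : (N:ℝ) = ((N - 1 : ℕ) : ℝ) + 1 := by rw [h1]; ring
    rw [h2, Real.Gamma_nat_eq_factorial]
  have hfacN : (N.factorial : ℝ) = (N:ℝ) * ((N-1).factorial : ℝ) := by
    rw [← Nat.mul_factorial_pred (show N ≠ 0 by omega)]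
    push_cast
    ring
  have haN : a ^ N = (N:ℝ) ^ N / (N.factorial : ℝ) := by
    have hw : (((N.factorial : ℝ)) ^ (-(1:ℝ)/(N:ℝ))) ^ (N:ℕ) = (N.factorial : ℝ)⁻¹ := by
      rw [← Real.rpow_natCast ((N.factorial : ℝ) ^ (-(1:ℝ)/(N:ℝ))) N,
        ← Real.rpow_mul hfacpos.le]
      rw [show (-(1:ℝ)/(N:ℝ)) * (N:ℝ) = -1 by field_simp]
      exact Real.rpow_neg_one _
    rw [hadef, mul_pow, hw, div_eq_mul_inv]
  have hc' : c * ((N:ℝ) - 1) = (N:ℝ) - a := by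
    rw [hcdef]
    field_simp
  have hconst : (N:ℝ) ^ N / (((N-1).factorial : ℝ)) = (N:ℝ) * a ^ N := by
    rw [haN, hfacN]
    field_simp
  have hpow : a * a ^ (N - 1) = a ^ N := by
    rw [← pow_succ']
    congr 1
    omega
  have hexp_eq : Real.exp (-(a*t)) * Real.exp (((N-1:ℕ):ℝ) * -(c*t)) =
      Real.exp (-((N:ℝ)*t)) := by
    rw [← Real.exp_add]
    congr 1
    rw [h1]
    linear_combination (-t) * hc'
  rw [gammaPDFReal, if_pos ht.le, hGamma,
    show ((N:ℝ) ^ ((N:ℝ)) : ℝ) = (N:ℝ) ^ (N:ℕ) from Real.rpow_natCast _ N,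
    show ((N:ℝ) - 1 : ℝ) = ((N-1:ℕ):ℝ) from h1.symm, Real.rpow_natCast,
    mul_pow, mul_pow, ← Real.exp_nat_mul, hconst, ← hexp_eq, ← hpow]
  ring


lemma hN1case (x : ℝ) (hx : 0 < x) :
    (1 - Real.exp (-((1:ℕ) * (((1:ℕ).factorial : ℝ) ^ (-(1 : ℝ) / (1:ℕ)))) * x)) ^ (1:ℕ)
      ≤ ((gammaMeasure ((1:ℕ) : ℝ) ((1:ℕ) : ℝ)) (Set.Iic x)).toReal := by
  haveI : IsProbabilityMeasure (expMeasure 1) := isProbabilityMeasure_expMeasure one_pos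
  have h2 : ((gammaMeasure ((1:ℕ):ℝ) ((1:ℕ):ℝ)) (Iic x)).toReal = cdf (expMeasure 1) x := by
    rw [cdf_eq_real, measureReal_def]
    norm_num [expMeasure]
  rw [h2, cdf_expMeasure_eq one_pos, if_pos hx.le]
  norm_num [Real.one_rpow]


end AlzerAux

open AlzerAux Filter Topology in
/-- **Alzer-type lower bound on the normalized incomplete gamma function.**
For every positive integer `N` and every `x > 0`, the CDF `F_N` of the
normalized Gamma distribution (shape `N`, rate `N`) satisfies
`(1 − e^{−a_N x})^N ≤ F_N(x)`, where `a_N = N·(N!)^{−1/N}`. -/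
theorem normalized_gamma_cdf_lower_bound
    (N : ℕ) (hN : 0 < N) (x : ℝ) (hx : 0 < x) :
    (1 - Real.exp (-(N * ((N.factorial : ℝ) ^ (-(1 : ℝ) / N))) * x)) ^ N
      ≤ ((gammaMeasure (N : ℝ) (N : ℝ)) (Set.Iic x)).toReal := by
  by_cases hN2 : 2 ≤ N
  case neg =>
    obtain rfl : N = 1 := by omega
    exact hN1case x hx
  case pos =>
  have hN0 : (0:ℝ) < (N:ℝ) := by exact_mod_cast hN
  haveI : IsProbabilityMeasure (gammaMeasure (N:ℝ) (N:ℝ)) :=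
    isProbabilityMeasure_gammaMeasure hN0 hN0
  have hF_eq : ∀ t : ℝ, ((gammaMeasure (N:ℝ) (N:ℝ)) (Iic t)).toReal
      = ∫ s in Iic t, gammaPDFReal (N:ℝ) (N:ℝ) s := by
    intro t
    rw [← measureReal_def, ← cdf_eq_real]
    exact cdf_gammaMeasure_eq_integral hN0 hN0 t
  set a : ℝ := (N:ℝ) * ((N.factorial : ℝ) ^ (-(1:ℝ) / (N:ℝ))) with hadef
  set c : ℝ := ((N:ℝ) - a) / ((N:ℝ) - 1) with hcdef
  have hfacpos : (0:ℝ) < (N.factorial:ℝ) := by exact_mod_cast N.factorial_pos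
  have ha : 0 < a := by rw [hadef]; positivity
  have hNR1 : ((N:ℝ) - 1) ≠ 0 := by
    have : (2:ℝ) ≤ (N:ℝ) := by exact_mod_cast hN2
    linarith
  have hpdf0 : ∀ s : ℝ, s ≤ 0 → gammaPDFReal (N:ℝ) (N:ℝ) s = 0 := by
    intro s hs
    rcases lt_or_eq_of_le hs with h | h
    · rw [gammaPDFReal, if_neg (not_le.mpr h)]
    · rw [h, gammaPDFReal, if_pos le_rfl, Real.zero_rpow (by simpa using hNR1), mul_zero,
        zero_mul]
  have hint : Integrable (gammaPDFReal (N:ℝ) (N:ℝ)) := by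
    constructor
    · exact (measurable_gammaPDFReal _ _).aestronglyMeasurable
    · rw [hasFiniteIntegral_iff_ofReal (ae_of_all _ (gammaPDFReal_nonneg hN0 hN0))]
      have h1 := lintegral_gammaPDF_eq_one hN0 hN0
      have h2 : ∫⁻ s, ENNReal.ofReal (gammaPDFReal (N:ℝ) (N:ℝ) s)
          = ∫⁻ s, gammaPDF (N:ℝ) (N:ℝ) s := rfl
      rw [h2, h1]
      exact ENNReal.one_lt_top
  set G : ℝ → ℝ := fun t => ∫ s in (0:ℝ)..t, gammaPDFReal (N:ℝ) (N:ℝ) s with hGdef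
  have hFG : ∀ t : ℝ, 0 ≤ t → ((gammaMeasure (N:ℝ) (N:ℝ)) (Iic t)).toReal = G t := by
    intro t htnn
    rw [hF_eq t, ← Iic_union_Ioc_eq_Iic htnn,
      setIntegral_union (Iic_disjoint_Ioc le_rfl) measurableSet_Ioc
        hint.integrableOn hint.integrableOn]
    have hzero : ∫ s in Iic (0:ℝ), gammaPDFReal (N:ℝ) (N:ℝ) s = 0 := by
      rw [setIntegral_congr_fun measurableSet_Iic
        (fun s hs => hpdf0 s hs : EqOn (gammaPDFReal (N:ℝ) (N:ℝ)) (fun _ => (0:ℝ)) (Iic 0))]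
      simp
    rw [hzero, zero_add]
    exact (intervalIntegral.integral_of_le htnn).symm
  have hGcont : Continuous G := hint.continuous_primitive 0
  have hPcont : Continuous (fun t : ℝ => (1 - Real.exp (-(a * t))) ^ N) := by
    apply Continuous.pow
    exact continuous_const.sub (Real.continuous_exp.comp (continuous_const.mul continuous_id).neg)
  have hderivG : ∀ t : ℝ, 0 < t → HasDerivAt G (gammaPDFReal (N:ℝ) (N:ℝ) t) t := by
    intro t ht
    have hpdfcont : ContinuousAt (gammaPDFReal (N:ℝ) (N:ℝ)) t := by
      have heq : (fun s : ℝ => (N:ℝ) ^ ((N:ℝ)) / Real.Gamma (N:ℝ) * s ^ ((N:ℝ)-1)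
          * Real.exp (-((N:ℝ) * s))) =ᶠ[nhds t] gammaPDFReal (N:ℝ) (N:ℝ) := by
        filter_upwards [Ioi_mem_nhds ht] with s hs
        rw [gammaPDFReal, if_pos (le_of_lt hs)]
      apply ContinuousAt.congr _ heq
      apply ContinuousAt.mul
      · apply ContinuousAt.mul continuousAt_const
        exact Real.continuousAt_rpow_const t _ (Or.inl (ne_of_gt ht))
      · exact (Real.continuous_exp.comp (continuous_const.mul continuous_id).neg).continuousAt
    exact intervalIntegral.integral_hasDerivAt_right hint.intervalIntegrable
      ((measurable_gammaPDFReal _ _).stronglyMeasurable.stronglyMeasurableAtFilter) hpdfcont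
  have hderivP : ∀ t : ℝ, HasDerivAt (fun t : ℝ => (1 - Real.exp (-(a * t))) ^ N)
      ((N:ℝ) * (1 - Real.exp (-(a*t))) ^ (N-1) * (a * Real.exp (-(a*t)))) t :=
    fun t => (hasDerivAt_E (a:=a) (t:=t)).pow N
  have hdsign : ∀ t : ℝ, 0 < t →
      (0 ≤ qf a c t → 0 ≤ gammaPDFReal (N:ℝ) (N:ℝ) t
        - (N:ℝ) * (1 - Real.exp (-(a*t))) ^ (N-1) * (a * Real.exp (-(a*t)))) ∧
      (qf a c t ≤ 0 → gammaPDFReal (N:ℝ) (N:ℝ) t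
        - (N:ℝ) * (1 - Real.exp (-(a*t))) ^ (N-1) * (a * Real.exp (-(a*t))) ≤ 0) := by
    intro t ht
    have hE := expos ha ht
    have hat : 0 < a * t := mul_pos ha ht
    have hpdf := pdf_closed_form hN2 hadef hcdef ht
    have hAexp : a*t*Real.exp (-(c*t)) = Real.exp (Real.log (a*t) - c*t) := by
      rw [Real.exp_sub, Real.exp_log hat, div_eq_mul_inv, ← Real.exp_neg]
    have hnn : (0:ℝ) ≤ (N:ℝ) * a * Real.exp (-(a*t)) := by positivity
    constructor
    · intro hq
      have hlog : Real.log (1 - Real.exp (-(a*t))) ≤ Real.log (a*t) - c*t := by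
        rw [qf] at hq; linarith
      have hb : 1 - Real.exp (-(a*t)) ≤ a*t*Real.exp (-(c*t)) := by
        rw [hAexp]
        calc 1 - Real.exp (-(a*t)) = Real.exp (Real.log (1 - Real.exp (-(a*t)))) :=
              (Real.exp_log hE).symm
          _ ≤ Real.exp (Real.log (a*t) - c*t) := Real.exp_le_exp.mpr hlog
      have hpowle : (1 - Real.exp (-(a*t)))^(N-1) ≤ (a*t*Real.exp (-(c*t)))^(N-1) :=
        pow_le_pow_left₀ hE.le hb (N-1)
      rw [hpdf]
      have h2 := mul_le_mul_of_nonneg_left hpowle hnn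
      linarith [h2]
    · intro hq
      have hlog : Real.log (a*t) - c*t ≤ Real.log (1 - Real.exp (-(a*t))) := by
        rw [qf] at hq; linarith
      have hb : a*t*Real.exp (-(c*t)) ≤ 1 - Real.exp (-(a*t)) := by
        rw [hAexp]
        calc Real.exp (Real.log (a*t) - c*t)
            ≤ Real.exp (Real.log (1 - Real.exp (-(a*t)))) := Real.exp_le_exp.mpr hlog
          _ = 1 - Real.exp (-(a*t)) := Real.exp_log hE
      have hpowle : (a*t*Real.exp (-(c*t)))^(N-1) ≤ (1 - Real.exp (-(a*t)))^(N-1) :=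
        pow_le_pow_left₀ (by positivity) hb (N-1)
      rw [hpdf]
      have h2 := mul_le_mul_of_nonneg_left hpowle hnn
      linarith [h2]
  rw [hFG x hx.le, neg_mul]
  by_cases hcase : ∃ t ∈ Ioc (0:ℝ) x, qf a c t < 0
  case neg =>
    push_neg at hcase
    have hmono : MonotoneOn (fun t => G t - (1 - Real.exp (-(a * t))) ^ N) (Icc 0 x) := by
      apply monotoneOn_of_deriv_nonneg (convex_Icc 0 x)
      · exact (hGcont.sub hPcont).continuousOn
      · rw [interior_Icc]
        intro t htm
        exact ((hderivG t htm.1).sub (hderivP t)).differentiableAt.differentiableWithinAt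
      · rw [interior_Icc]
        intro t htm
        rw [(show HasDerivAt (fun t => G t - (1 - Real.exp (-(a * t))) ^ N) _ t from (hderivG t htm.1).sub (hderivP t)).deriv]
        exact (hdsign t htm.1).1 (hcase t ⟨htm.1, htm.2.le⟩)
    have h0 : G 0 - (1 - Real.exp (-(a * 0))) ^ N ≤ G x - (1 - Real.exp (-(a * x))) ^ N :=
      hmono ⟨le_rfl, hx.le⟩ ⟨hx.le, le_rfl⟩ hx.le
    have hG0 : G 0 = 0 := intervalIntegral.integral_same
    have hP0 : (1 - Real.exp (-(a * 0))) ^ N = 0 := by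
      rw [mul_zero, neg_zero, Real.exp_zero, sub_self]
      exact zero_pow (by omega)
    linarith
  case pos =>
    obtain ⟨x1, hx1mem, hq1⟩ := hcase
    have hx1 : 0 < x1 := hx1mem.1
    have hanti : AntitoneOn (fun t => G t - (1 - Real.exp (-(a * t))) ^ N) (Ici x1) := by
      apply antitoneOn_of_deriv_nonpos (convex_Ici x1)
      · exact (hGcont.sub hPcont).continuousOn
      · rw [interior_Ici]
        intro t htm
        have ht0 : 0 < t := lt_trans hx1 htm
        exact ((hderivG t ht0).sub (hderivP t)).differentiableAt.differentiableWithinAt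
      · rw [interior_Ici]
        intro t htm
        have ht0 : 0 < t := lt_trans hx1 htm
        rw [(show HasDerivAt (fun t => G t - (1 - Real.exp (-(a * t))) ^ N) _ t from (hderivG t ht0).sub (hderivP t)).deriv]
        exact (hdsign t ht0).2 (qf_nonpos_propagate ha hx1 hq1 htm)
    have hFtop : Tendsto (fun t => ((gammaMeasure (N:ℝ) (N:ℝ)) (Iic t)).toReal) atTop (𝓝 1) := by
      have h := tendsto_measure_Iic_atTop (μ := gammaMeasure (N:ℝ) (N:ℝ))
      rw [measure_univ] at h
      have h2 := (ENNReal.tendsto_toReal (by norm_num : (1:ENNReal) ≠ ⊤)).comp h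
      exact h2
    have hGtop : Tendsto G atTop (𝓝 1) := by
      apply hFtop.congr'
      filter_upwards [eventually_ge_atTop (0:ℝ)] with t ht
      exact hFG t ht
    have hPtop : Tendsto (fun t : ℝ => (1 - Real.exp (-(a * t))) ^ N) atTop (𝓝 1) := by
      have h1 : Tendsto (fun t : ℝ => a * t) atTop atTop :=
        Tendsto.const_mul_atTop ha tendsto_id
      have h2 : Tendsto (fun t : ℝ => Real.exp (-(a*t))) atTop (𝓝 0) :=
        Real.tendsto_exp_atBot.comp (tendsto_neg_atTop_atBot.comp h1)
      have h3 : Tendsto (fun t : ℝ => (1 - Real.exp (-(a*t)))) atTop (𝓝 1) := by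
        simpa using tendsto_const_nhds.sub h2
      simpa using h3.pow N
    have hgtop : Tendsto (fun t => G t - (1 - Real.exp (-(a * t))) ^ N) atTop (𝓝 0) := by
      simpa using hGtop.sub hPtop
    have hev : ∀ᶠ t in atTop, G t - (1 - Real.exp (-(a * t))) ^ N
        ≤ G x - (1 - Real.exp (-(a * x))) ^ N := by
      have hxmem : x ∈ Ici x1 := hx1mem.2
      filter_upwards [eventually_ge_atTop x] with t ht
      exact hanti hxmem (le_trans hx1mem.2 ht) ht
    have hfin := le_of_tendsto hgtop hev
    linarith


end AlzerAux
end

section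
/- For every positive integer N and every x > 0, the cumulative distribution function F_N of the normalized Gamma distribution with parameter N satisfies F_N(x) ≤ (1 − e^{−N x})^N. -/
open MeasureTheory ProbabilityTheory Set Filter Topology

/-- derivative of the partial exponential sum times `exp (-t)`. -/
lemma aux_deriv_sum (m : ℕ) (t : ℝ) :
    HasDerivAt (fun t : ℝ => (∑ k ∈ Finset.range (m+1), t^k / (Nat.factorial k)) * Real.exp (-t))
      (-(t^m / (Nat.factorial m)) * Real.exp (-t)) t := by
  have hexp : ∀ s : ℝ, HasDerivAt (fun t : ℝ => Real.exp (-t)) (-Real.exp (-s)) s := by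
    intro s
    have h := ((Real.hasDerivAt_exp (-s)).comp s ((hasDerivAt_id s).neg))
    simp at h
    exact h
  induction m with
  | zero =>
      simpa using (hexp t).const_mul (1:ℝ)
  | succ m ih =>
      have hterm : HasDerivAt (fun t : ℝ => t^(m+1) / (Nat.factorial (m+1)) * Real.exp (-t))
          (((m+1 : ℝ) * t^m / (Nat.factorial (m+1))) * Real.exp (-t)
            + t^(m+1) / (Nat.factorial (m+1)) * (-Real.exp (-t))) t := by
        have h1 : HasDerivAt (fun t : ℝ => t^(m+1) / (Nat.factorial (m+1)))
            ((m+1 : ℝ) * t^m / (Nat.factorial (m+1))) t := by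
          simpa using (hasDerivAt_pow (m+1) t).div_const (Nat.factorial (m+1) : ℝ)
        exact h1.mul (hexp t)
      have hsum := ih.add hterm
      have hfe : (fun t : ℝ => (∑ k ∈ Finset.range (m+1), t^k / (Nat.factorial k)) * Real.exp (-t)
            + t^(m+1) / (Nat.factorial (m+1)) * Real.exp (-t))
          = fun t : ℝ => (∑ k ∈ Finset.range (m+1+1), t^k / (Nat.factorial k)) * Real.exp (-t) := by
        funext t
        rw [Finset.sum_range_succ (fun k => t^k / (Nat.factorial k : ℝ)) (m+1), add_mul]
      simp only [Pi.add_def] at hsum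
      rw [hfe] at hsum
      refine hsum.congr_deriv ?_
      have hfac : (Nat.factorial (m+1) : ℝ) = (m+1 : ℝ) * (Nat.factorial m : ℝ) := by
        push_cast [Nat.factorial_succ]; ring
      have hm : (Nat.factorial m : ℝ) ≠ 0 := by positivity
      have hm1 : (Nat.factorial (m+1) : ℝ) ≠ 0 := by positivity
      rw [hfac]
      field_simp [hfac]
      ring

/-- `(1 - e^{-t})/t` is antitone, in cross-multiplied form. -/
lemma aux_phi {a b : ℝ} (ha : 0 < a) (hab : a ≤ b) :
    (1 - Real.exp (-b)) * a ≤ (1 - Real.exp (-a)) * b := by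
  set w : ℝ → ℝ := fun t => (1 - Real.exp (-a)) * t - (1 - Real.exp (-t)) * a with hw_def
  have hexp : ∀ s : ℝ, HasDerivAt (fun t : ℝ => Real.exp (-t)) (-Real.exp (-s)) s := by
    intro s
    have h := ((Real.hasDerivAt_exp (-s)).comp s ((hasDerivAt_id s).neg))
    simp at h
    exact h
  have hw : ∀ t : ℝ, HasDerivAt w ((1 - Real.exp (-a)) - Real.exp (-t) * a) t := by
    intro t
    have h1 : HasDerivAt (fun t : ℝ => (1 - Real.exp (-a)) * t) (1 - Real.exp (-a)) t := by
      simpa using (hasDerivAt_id t).const_mul (1 - Real.exp (-a))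
    have h2 : HasDerivAt (fun t : ℝ => (1 - Real.exp (-t)) * a) (Real.exp (-t) * a) t := by
      simpa using (((hexp t).const_sub 1).mul_const a)
    exact h1.sub h2
  have hdiff : Differentiable ℝ w := fun t => (hw t).differentiableAt
  have mono : MonotoneOn w (Icc a b) := by
    apply monotoneOn_of_deriv_nonneg (convex_Icc a b) hdiff.continuous.continuousOn
      hdiff.differentiableOn
    intro t ht
    rw [interior_Icc] at ht
    rw [(hw t).deriv]
    have h1 : Real.exp (-t) ≤ Real.exp (-a) := Real.exp_le_exp.mpr (by linarith [ht.1])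
    have h2 : a + 1 ≤ Real.exp a := Real.add_one_le_exp a
    have h3 : Real.exp (-a) * Real.exp a = 1 := by
      rw [← Real.exp_add]; simp
    have h4 : 0 < Real.exp (-a) := Real.exp_pos _
    nlinarith
  have hab' := mono (left_mem_Icc.mpr hab) (right_mem_Icc.mpr hab) hab
  simp only [hw_def] at hab'
  nlinarith [hab']

/-- The key Alzer-type inequality. -/
lemma alzer_key (M : ℕ) (s : ℝ) (hs : 0 < s) :
    1 - (∑ k ∈ Finset.range (M+1), s^k / (Nat.factorial k)) * Real.exp (-s)
      ≤ (1 - Real.exp (-s)) ^ (M+1) := by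
  set d : ℝ → ℝ := fun t => (M+1 : ℝ) * (1 - Real.exp (-t))^M - t^M / (Nat.factorial M) with hd_def
  set h : ℝ → ℝ := fun t => (∑ k ∈ Finset.range (M+1), t^k / (Nat.factorial k)) * Real.exp (-t)
    + (1 - Real.exp (-t))^(M+1) with hh_def
  suffices hmain : 1 ≤ h s by
    simp only [hh_def] at hmain
    linarith
  have hexp : ∀ t : ℝ, HasDerivAt (fun t : ℝ => Real.exp (-t)) (-Real.exp (-t)) t := by
    intro t
    have h := ((Real.hasDerivAt_exp (-t)).comp t ((hasDerivAt_id t).neg))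
    simp at h
    exact h
  have hD : ∀ t : ℝ, HasDerivAt h (Real.exp (-t) * d t) t := by
    intro t
    have h1 := aux_deriv_sum M t
    have hu : HasDerivAt (fun t : ℝ => 1 - Real.exp (-t)) (Real.exp (-t)) t := by
      simpa using (hexp t).const_sub 1
    have h2 : HasDerivAt (fun t : ℝ => (1 - Real.exp (-t))^(M+1))
        ((M+1 : ℝ) * (1 - Real.exp (-t))^M * Real.exp (-t)) t := by
      have := hu.pow (M+1)
      simp at this
      exact this
    have := h1.add h2
    refine this.congr_deriv ?_
    simp only [hd_def]
    ring
  have hdiff : Differentiable ℝ h := fun t => (hD t).differentiableAt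
  have hzero : h 0 = 1 := by
    simp only [hh_def]
    rw [Finset.sum_eq_single 0]
    · simp
    · intro k _ hk
      simp [zero_pow hk]
    · simp
  have hsign : ∀ t1 t2 : ℝ, 0 < t1 → t1 ≤ t2 → d t1 < 0 → d t2 ≤ 0 := by
    intro t1 t2 h1 h12 hneg
    have h2 : 0 < t2 := lt_of_lt_of_le h1 h12
    have e1 : 0 ≤ 1 - Real.exp (-t1) := by
      have := Real.exp_le_exp.mpr (show -t1 ≤ 0 by linarith)
      simpa using this
    have e2 : 0 ≤ 1 - Real.exp (-t2) := by
      have := Real.exp_le_exp.mpr (show -t2 ≤ 0 by linarith)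
      simpa using this
    have phi := aux_phi h1 h12
    have powed : (1 - Real.exp (-t2))^M * t1^M ≤ (1 - Real.exp (-t1))^M * t2^M := by
      have := pow_le_pow_left₀ (mul_nonneg e2 h1.le) phi M
      simpa [mul_pow] using this
    simp only [hd_def] at hneg ⊢
    have hfp : (0:ℝ) < (Nat.factorial M : ℝ) := by positivity
    have ht1p : (0:ℝ) < t1^M := pow_pos h1 M
    have ht2p : (0:ℝ) < t2^M := pow_pos h2 M
    have hneg' : (M+1 : ℝ) * (1 - Real.exp (-t1))^M < t1^M / (Nat.factorial M) := by linarith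
    have A : (M+1 : ℝ) * ((1 - Real.exp (-t2))^M * t1^M)
        ≤ (M+1 : ℝ) * ((1 - Real.exp (-t1))^M * t2^M) :=
      mul_le_mul_of_nonneg_left powed (by positivity)
    have B : ((M+1 : ℝ) * (1 - Real.exp (-t1))^M) * t2^M
        < (t1^M / (Nat.factorial M)) * t2^M := mul_lt_mul_of_pos_right hneg' ht2p
    have C : t1^M * ((M+1 : ℝ) * (1 - Real.exp (-t2))^M) < t1^M * (t2^M / (Nat.factorial M)) := by
      have h₁ : t1^M * ((M+1 : ℝ) * (1 - Real.exp (-t2))^M)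
          = (M+1 : ℝ) * ((1 - Real.exp (-t2))^M * t1^M) := by ring
      have h₂ : t1^M * (t2^M / (Nat.factorial M)) = (t1^M / (Nat.factorial M)) * t2^M := by ring
      rw [h₁, h₂]
      calc (M+1 : ℝ) * ((1 - Real.exp (-t2))^M * t1^M)
          ≤ (M+1 : ℝ) * ((1 - Real.exp (-t1))^M * t2^M) := A
        _ = ((M+1 : ℝ) * (1 - Real.exp (-t1))^M) * t2^M := by ring
        _ < (t1^M / (Nat.factorial M)) * t2^M := B
    have := (mul_lt_mul_iff_right₀ ht1p).mp C
    linarith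
  by_cases H : ∀ t ∈ Ioo (0:ℝ) s, 0 ≤ d t
  · have mono : MonotoneOn h (Icc 0 s) := by
      apply monotoneOn_of_deriv_nonneg (convex_Icc 0 s) hdiff.continuous.continuousOn
        hdiff.differentiableOn
      intro t ht
      rw [interior_Icc] at ht
      rw [(hD t).deriv]
      exact mul_nonneg (Real.exp_nonneg _) (H t ht)
    have := mono (left_mem_Icc.mpr hs.le) (right_mem_Icc.mpr hs.le) hs.le
    rwa [hzero] at this
  · push_neg at H
    obtain ⟨t1, ht1, hd1⟩ := H
    have anti : ∀ b : ℝ, s ≤ b → h b ≤ h s := by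
      intro b hb
      have hanti : AntitoneOn h (Icc s b) := by
        apply antitoneOn_of_deriv_nonpos (convex_Icc s b) hdiff.continuous.continuousOn
          hdiff.differentiableOn
        intro t ht
        rw [interior_Icc] at ht
        rw [(hD t).deriv]
        have hdt : d t ≤ 0 := hsign t1 t ht1.1 (by linarith [ht1.2, ht.1]) hd1
        exact mul_nonpos_of_nonneg_of_nonpos (Real.exp_nonneg _) hdt
      exact hanti (left_mem_Icc.mpr hb) (right_mem_Icc.mpr hb) hb
    have lim : Tendsto h atTop (𝓝 1) := by
      have l1 : Tendsto (fun t : ℝ =>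
          (∑ k ∈ Finset.range (M+1), t^k / (Nat.factorial k)) * Real.exp (-t)) atTop (𝓝 0) := by
        have heq : (fun t : ℝ =>
            (∑ k ∈ Finset.range (M+1), t^k / (Nat.factorial k)) * Real.exp (-t))
            = fun t : ℝ => ∑ k ∈ Finset.range (M+1), (t^k * Real.exp (-t)) / (Nat.factorial k) := by
          funext t
          rw [Finset.sum_mul]
          exact Finset.sum_congr rfl (fun k _ => by ring)
        rw [heq]
        have : Tendsto (fun t : ℝ => ∑ k ∈ Finset.range (M+1),
            (t^k * Real.exp (-t)) / (Nat.factorial k)) atTop (𝓝 (∑ k ∈ Finset.range (M+1), 0)) := by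
          apply tendsto_finset_sum
          intro k _
          simpa using (Real.tendsto_pow_mul_exp_neg_atTop_nhds_zero k).div_const
            (Nat.factorial k : ℝ)
        simpa using this
      have l2 : Tendsto (fun t : ℝ => (1 - Real.exp (-t))^(M+1)) atTop (𝓝 1) := by
        have : Tendsto (fun t : ℝ => 1 - Real.exp (-t)) atTop (𝓝 1) := by
          simpa using (Real.tendsto_exp_neg_atTop_nhds_zero).const_sub 1
        simpa using this.pow (M+1)
      have := l1.add l2
      simpa using this
    exact le_of_tendsto lim (eventually_atTop.mpr ⟨s, anti⟩)

/-- Closed form of the incomplete gamma integral. -/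
lemma cdf_closed_form (M : ℕ) (x : ℝ) (hx : 0 ≤ x) :
    ∫ t in (0:ℝ)..x, ((M:ℝ)+1)^(M+1) / (Nat.factorial M) * t^M * Real.exp (-(((M:ℝ)+1) * t))
      = 1 - (∑ k ∈ Finset.range (M+1), (((M:ℝ)+1) * x)^k / (Nat.factorial k))
          * Real.exp (-(((M:ℝ)+1) * x)) := by
  set c : ℝ := (M:ℝ) + 1 with hc_def
  have hc : 0 < c := by positivity
  set φ : ℝ → ℝ := fun t =>
    -((∑ k ∈ Finset.range (M+1), (c*t)^k / (Nat.factorial k)) * Real.exp (-(c*t))) with hφ_def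
  have hD : ∀ t : ℝ, HasDerivAt φ (c^(M+1) / (Nat.factorial M) * t^M * Real.exp (-(c*t))) t := by
    intro t
    have h1 := aux_deriv_sum M (c*t)
    have hct : HasDerivAt (fun t : ℝ => c * t) c t := by
      simpa using (hasDerivAt_id t).const_mul c
    have h2 := (h1.comp t hct).neg
    refine h2.congr_deriv ?_
    rw [mul_pow]
    ring
  have hcont : Continuous (fun t : ℝ => c^(M+1) / (Nat.factorial M) * t^M * Real.exp (-(c*t))) := by
    fun_prop
  rw [intervalIntegral.integral_eq_sub_of_hasDerivAt (fun t _ => hD t)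
    (hcont.intervalIntegrable 0 x)]
  have hφ0 : φ 0 = -1 := by
    simp only [hφ_def]
    rw [Finset.sum_eq_single 0]
    · simp
    · intro k _ hk
      simp [zero_pow hk]
    · simp
  rw [hφ0]
  simp only [hφ_def]
  ring

/-- **Alzer-type upper bound on the normalized incomplete gamma function.**
For every positive integer `N` and every `x > 0`, the CDF `F_N` of the
normalized Gamma distribution (shape `N`, rate `N`) satisfies
`F_N(x) ≤ (1 − e^{−N x})^N`. -/
theorem normalized_gamma_cdf_upper_bound
    (N : ℕ) (hN : 0 < N) (x : ℝ) (hx : 0 < x) :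
    ((gammaMeasure (N : ℝ) (N : ℝ)) (Set.Iic x)).toReal
      ≤ (1 - Real.exp (-(N : ℝ) * x)) ^ N := by
  obtain ⟨M, rfl⟩ : ∃ M, N = M + 1 := ⟨N - 1, (Nat.succ_pred_eq_of_pos hN).symm⟩
  have hc : (0:ℝ) < ((M+1 : ℕ) : ℝ) := by positivity
  haveI : IsProbabilityMeasure (gammaMeasure ((M+1 : ℕ) : ℝ) ((M+1 : ℕ) : ℝ)) :=
    isProbabilityMeasure_gammaMeasure hc hc
  have step1 : ((gammaMeasure ((M+1 : ℕ) : ℝ) ((M+1 : ℕ) : ℝ)) (Set.Iic x)).toReal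
      = ∫ t in Iic x, gammaPDFReal ((M+1 : ℕ) : ℝ) ((M+1 : ℕ) : ℝ) t := by
    rw [← measureReal_def, ← cdf_eq_real, cdf_gammaMeasure_eq_integral hc hc]
  -- global integrability
  have hintg : Integrable (gammaPDFReal ((M+1 : ℕ) : ℝ) ((M+1 : ℕ) : ℝ)) := by
    constructor
    · exact (measurable_gammaPDFReal _ _).aestronglyMeasurable
    · have heq : ∫⁻ t, ‖gammaPDFReal ((M+1 : ℕ) : ℝ) ((M+1 : ℕ) : ℝ) t‖ₑ
          = ∫⁻ t, gammaPDF ((M+1 : ℕ) : ℝ) ((M+1 : ℕ) : ℝ) t := by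
        apply lintegral_congr
        intro t
        rw [gammaPDF, Real.enorm_eq_ofReal (gammaPDFReal_nonneg hc hc t)]
      rw [HasFiniteIntegral, heq, lintegral_gammaPDF_eq_one hc hc]
      exact ENNReal.one_lt_top
  have left0 : ∫ t in Iic 0, gammaPDFReal ((M+1 : ℕ) : ℝ) ((M+1 : ℕ) : ℝ) t = 0 := by
    have hae : ∀ᵐ t : ℝ, t ≠ (0:ℝ) := by
      simp [ae_iff]
    have : ∀ᵐ t ∂(volume.restrict (Iic (0:ℝ))),
        gammaPDFReal ((M+1 : ℕ) : ℝ) ((M+1 : ℕ) : ℝ) t = 0 := by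
      rw [ae_restrict_iff' measurableSet_Iic]
      filter_upwards [hae] with t ht hmem
      have : t < 0 := lt_of_le_of_ne hmem ht
      simp [gammaPDFReal, not_le.mpr this]
    rw [integral_congr_ae this, integral_zero]
  have split : ∫ t in Iic x, gammaPDFReal ((M+1 : ℕ) : ℝ) ((M+1 : ℕ) : ℝ) t
      = ∫ t in (0:ℝ)..x, gammaPDFReal ((M+1 : ℕ) : ℝ) ((M+1 : ℕ) : ℝ) t := by
    rw [← intervalIntegral.integral_Iic_sub_Iic hintg.integrableOn hintg.integrableOn, left0, sub_zero]
  have congrInt : ∫ t in (0:ℝ)..x, gammaPDFReal ((M+1 : ℕ) : ℝ) ((M+1 : ℕ) : ℝ) t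
      = ∫ t in (0:ℝ)..x, ((M:ℝ)+1)^(M+1) / (Nat.factorial M) * t^M
          * Real.exp (-(((M:ℝ)+1) * t)) := by
    apply intervalIntegral.integral_congr
    intro t ht
    rw [uIcc_of_le hx.le] at ht
    rw [gammaPDFReal, if_pos ht.1]
    have e1 : ((M+1 : ℕ) : ℝ) ^ (((M+1 : ℕ) : ℝ)) = ((M:ℝ)+1)^(M+1) := by
      rw [show (((M+1 : ℕ)) : ℝ) = (((M+1 : ℕ) : ℕ) : ℝ) from rfl, Real.rpow_natCast]
      push_cast
      ring
    have e2 : t ^ (((M+1 : ℕ) : ℝ) - 1) = t ^ M := by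
      rw [show ((M+1 : ℕ) : ℝ) - 1 = ((M : ℕ) : ℝ) by push_cast; ring, Real.rpow_natCast]
    have e3 : Real.Gamma ((M+1 : ℕ) : ℝ) = Nat.factorial M := by
      rw [show ((M+1 : ℕ) : ℝ) = (M : ℝ) + 1 by push_cast; ring]
      exact Real.Gamma_nat_eq_factorial M
    rw [e1, e2, e3]
    have e4 : -(((M+1 : ℕ) : ℝ) * t) = -(((M:ℝ)+1) * t) := by push_cast; ring
    rw [e4]
  rw [step1, split, congrInt, cdf_closed_form M x hx.le]
  have key := alzer_key M (((M:ℝ)+1) * x) (by positivity)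
  have e5 : -(((M+1 : ℕ) : ℝ)) * x = -(((M:ℝ)+1) * x) := by push_cast; ring
  rw [e5]
  exact key
end

section
/- Let I be a nonnegative random variable on a probability space (Ω, 𝒜, P), let τ > 0, let N be a positive integer, set a_N = N·(N!)^{−1/N}, and let g be a normalized-Gamma(N) random variable independent of I. Then P(I < τ·g) ≤ Σ_{n=1}^{N} (−1)^{n+1} · binom(N, n) · E[exp(−a_N n I / τ)]. -/
open MeasureTheory ProbabilityTheory Set

open Filter Topology

namespace SmoothedAux

noncomputable def aa (N : ℕ) : ℝ := N * (N.factorial : ℝ) ^ (-(1:ℝ)/N)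
noncomputable def cc (N : ℕ) : ℝ := (N:ℝ)^N / (N-1).factorial
noncomputable def ff (N : ℕ) (x : ℝ) : ℝ := cc N * x^(N-1) * Real.exp (-(N*x))
noncomputable def HH (N : ℕ) (t : ℝ) : ℝ := (1 - Real.exp (-(aa N * t)))^N
noncomputable def HH' (N : ℕ) (t : ℝ) : ℝ :=
  N * (aa N * Real.exp (-(aa N * t))) * (1 - Real.exp (-(aa N * t)))^(N-1)
noncomputable def FF (N : ℕ) (t : ℝ) : ℝ := ∫ u in (0:ℝ)..t, gammaPDFReal N N u
noncomputable def ψ (N : ℕ) (t : ℝ) : ℝ :=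
  Real.log (cc N) - Real.log (N * aa N) + ((N:ℝ)-1)*Real.log t - ((N:ℝ) - aa N)*t
    - ((N:ℝ)-1)*Real.log (1 - Real.exp (-(aa N*t)))

variable {N : ℕ}

lemma fact_pos' : (0:ℝ) < (N.factorial : ℝ) := by exact_mod_cast N.factorial_pos

lemma aa_pos (hN : 0 < N) : 0 < aa N := by
  have := fact_pos' (N := N)
  have : (0:ℝ) < (N.factorial : ℝ) ^ (-(1:ℝ)/N) := Real.rpow_pos_of_pos this _
  have hN' : (0:ℝ) < N := by exact_mod_cast hN
  exact mul_pos hN' this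

lemma aa_pow (hN : 0 < N) : aa N ^ N = (N:ℝ)^N / N.factorial := by
  have hf := fact_pos' (N := N)
  rw [aa, mul_pow, ← Real.rpow_natCast ((N.factorial : ℝ) ^ (-(1:ℝ)/N)) N,
    ← Real.rpow_mul hf.le]
  have hN' : (N:ℝ) ≠ 0 := by exact_mod_cast hN.ne'
  have he : (-(1:ℝ)/N) * N = -1 := by field_simp
  rw [he, Real.rpow_neg_one]
  ring

lemma cc_pos (hN : 0 < N) : 0 < cc N := by
  have h1 : (0:ℝ) < ((N-1).factorial : ℝ) := by exact_mod_cast (N-1).factorial_pos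
  have hN' : (0:ℝ) < N := by exact_mod_cast hN
  exact div_pos (pow_pos hN' _) h1

lemma pdf_eq (hN : 0 < N) {x : ℝ} (hx : 0 ≤ x) : gammaPDFReal N N x = ff N x := by
  rw [gammaPDFReal, if_pos hx, ff, cc]
  have h1 : Real.Gamma (N:ℝ) = ((N-1).factorial : ℝ) := by
    conv_lhs => rw [(by omega : N = (N-1)+1)]
    push_cast
    exact Real.Gamma_nat_eq_factorial (N-1)
  have h2 : (N:ℝ) ^ (N:ℝ) = (N:ℝ) ^ (N:ℕ) := Real.rpow_natCast _ _
  have h3 : x ^ ((N:ℝ)-1) = x ^ ((N-1 : ℕ):ℝ) := by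
    congr 1
    rw [Nat.cast_sub hN]
    norm_num
  rw [h1, h2, h3, Real.rpow_natCast]


lemma ff_cont : Continuous (ff N) := by
  unfold ff
  fun_prop

lemma pdf_integrable (hN : 0 < N) : Integrable (gammaPDFReal N N) (volume : Measure ℝ) := by
  have hNpos : (0:ℝ) < N := by exact_mod_cast hN
  have h1 : ∫⁻ x, gammaPDF N N x = 1 := lintegral_gammaPDF_eq_one hNpos hNpos
  refine ⟨(measurable_gammaPDFReal _ _).aestronglyMeasurable, ?_⟩
  rw [hasFiniteIntegral_iff_norm]
  have : ∀ x : ℝ, ENNReal.ofReal ‖gammaPDFReal N N x‖ = gammaPDF N N x := by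
    intro x
    rw [Real.norm_of_nonneg (gammaPDFReal_nonneg hNpos hNpos x)]
    rfl
  simp_rw [this, h1]
  norm_num

lemma FF_cont (hN : 0 < N) : Continuous (FF N) :=
  (pdf_integrable hN).continuous_primitive 0

lemma FF_hasDerivAt (hN : 0 < N) {t : ℝ} (ht : 0 < t) : HasDerivAt (FF N) (ff N t) t := by
  have hloc : gammaPDFReal N N =ᶠ[𝓝 t] ff N := by
    filter_upwards [Ioi_mem_nhds ht] with x hx
    exact pdf_eq hN (le_of_lt hx)
  have hct : ContinuousAt (gammaPDFReal N N) t :=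
    ContinuousAt.congr (ff_cont.continuousAt) hloc.symm
  have h := intervalIntegral.integral_hasDerivAt_right
    ((pdf_integrable hN).intervalIntegrable (a := 0) (b := t))
    ((measurable_gammaPDFReal _ _).stronglyMeasurable.stronglyMeasurableAtFilter) hct
  rw [pdf_eq hN ht.le] at h
  exact h

lemma FF_eq_measure (hN : 0 < N) {t : ℝ} (ht : 0 ≤ t) :
    (gammaMeasure N N (Iic t)).toReal = FF N t := by
  have hNpos : (0:ℝ) < N := by exact_mod_cast hN
  rw [gammaMeasure, withDensity_apply _ measurableSet_Iic,
    lintegral_Iic_eq_lintegral_Iio_add_Icc _ ht, lintegral_gammaPDF_of_nonpos le_rfl, zero_add]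
  have h2 : ∫⁻ x in Icc 0 t, gammaPDF N N x
      = ENNReal.ofReal (∫ x in Icc 0 t, gammaPDFReal N N x) := by
    simp only [gammaPDF]
    rw [← ofReal_integral_eq_lintegral_ofReal ((pdf_integrable hN).restrict)
      (Filter.Eventually.of_forall (fun x => gammaPDFReal_nonneg hNpos hNpos x))]
  rw [h2, ENNReal.toReal_ofReal (by
    apply integral_nonneg (fun x => gammaPDFReal_nonneg hNpos hNpos x)), FF,
    intervalIntegral.integral_of_le ht, integral_Icc_eq_integral_Ioc]

lemma FF_tendsto_one (hN : 0 < N) : Tendsto (FF N) atTop (𝓝 1) := by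
  have hNpos : (0:ℝ) < N := by exact_mod_cast hN
  have : IsProbabilityMeasure (gammaMeasure (N:ℝ) (N:ℝ)) :=
    isProbabilityMeasure_gammaMeasure hNpos hNpos
  have h1 : Tendsto (fun t : ℝ => gammaMeasure (N:ℝ) (N:ℝ) (Iic t)) atTop (𝓝 1) := by
    simpa using tendsto_measure_Iic_atTop (gammaMeasure (N:ℝ) (N:ℝ))
  have h2 : Tendsto (fun t : ℝ => (gammaMeasure (N:ℝ) (N:ℝ) (Iic t)).toReal) atTop (𝓝 1) := by
    have := (ENNReal.tendsto_toReal (by norm_num)).comp h1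
    exact this
  apply h2.congr'
  filter_upwards [eventually_ge_atTop (0:ℝ)] with t ht
  exact FF_eq_measure hN ht

lemma HH_hasDerivAt (t : ℝ) : HasDerivAt (HH N) (HH' N t) t := by
  have h1 : HasDerivAt (fun t : ℝ => 1 - Real.exp (-(aa N * t)))
      (aa N * Real.exp (-(aa N * t))) t := by
    have := ((hasDerivAt_id t).const_mul (aa N)).neg.exp
    simpa [mul_comm] using (this.const_sub 1)
  have h2 := h1.pow N
  have : (N:ℝ) * (1 - Real.exp (-(aa N * t))) ^ (N-1) * (aa N * Real.exp (-(aa N * t)))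
      = HH' N t := by
    rw [HH']; ring
  rw [← this]
  exact h2

lemma HH'_pos (hN : 0 < N) {t : ℝ} (ht : 0 < t) : 0 < HH' N t := by
  have ha := aa_pos (N := N) hN
  have h1 : 0 < 1 - Real.exp (-(aa N * t)) := by
    have : Real.exp (-(aa N * t)) < 1 := by
      rw [Real.exp_lt_one_iff]
      nlinarith
    linarith
  have hNpos : (0:ℝ) < N := by exact_mod_cast hN
  exact mul_pos (mul_pos hNpos (mul_pos ha (Real.exp_pos _))) (pow_pos h1 _)

lemma HH_tendsto_one (hN : 0 < N) : Tendsto (HH N) atTop (𝓝 1) := by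
  have ha := aa_pos (N := N) hN
  have h1 : Tendsto (fun t : ℝ => -(aa N * t)) atTop atBot := by
    apply Filter.tendsto_neg_atBot_iff.mpr
    exact Tendsto.const_mul_atTop ha tendsto_id
  have h2 : Tendsto (fun t : ℝ => 1 - Real.exp (-(aa N * t))) atTop (𝓝 1) := by
    have := Real.tendsto_exp_atBot.comp h1
    simpa using (tendsto_const_nhds (x := (1:ℝ))).sub this
  have := h2.pow N
  rw [one_pow] at this
  exact this


noncomputable def hfun (N : ℕ) (t : ℝ) : ℝ := t⁻¹ - aa N * (Real.exp (aa N * t) - 1)⁻¹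
noncomputable def ψ' (N : ℕ) (t : ℝ) : ℝ := ((N:ℝ)-1) * hfun N t - ((N:ℝ) - aa N)

lemma one_sub_exp_pos (hN : 0 < N) {t : ℝ} (ht : 0 < t) :
    0 < 1 - Real.exp (-(aa N * t)) := by
  have ha := aa_pos (N := N) hN
  have : Real.exp (-(aa N * t)) < 1 := by
    rw [Real.exp_lt_one_iff]; nlinarith
  linarith

lemma exp_sub_one_pos (hN : 0 < N) {t : ℝ} (ht : 0 < t) :
    0 < Real.exp (aa N * t) - 1 := by
  have ha := aa_pos (N := N) hN
  have : (1:ℝ) < Real.exp (aa N * t) := by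
    rw [← Real.exp_zero]
    exact Real.exp_lt_exp.mpr (by nlinarith)
  linarith

lemma inner_hasDerivAt (N : ℕ) (t : ℝ) :
    HasDerivAt (fun u : ℝ => Real.exp (aa N * u) - 1) (aa N * Real.exp (aa N * t)) t := by
  have := (((hasDerivAt_id t).const_mul (aa N)).exp).sub_const 1
  simpa [mul_comm] using this

lemma hfun_hasDerivAt (hN : 0 < N) {t : ℝ} (ht : 0 < t) :
    HasDerivAt (hfun N)
      (-(t^2)⁻¹ - aa N * (-(aa N * Real.exp (aa N * t)) / (Real.exp (aa N * t) - 1)^2)) t := by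
  have h1 : HasDerivAt (fun u : ℝ => u⁻¹) (-(t^2)⁻¹) t := hasDerivAt_inv ht.ne'
  have h3 := ((inner_hasDerivAt N t).inv (exp_sub_one_pos hN ht).ne').const_mul (aa N)
  exact h1.sub h3

lemma sinh_ineq {s : ℝ} (hs : 0 ≤ s) : s * Real.exp (s/2) ≤ Real.exp s - 1 := by
  have h := Real.self_le_sinh_iff.mpr (by linarith : (0:ℝ) ≤ s/2)
  rw [Real.sinh_eq] at h
  have hE : Real.exp (s/2) * Real.exp (s/2) = Real.exp s := by
    rw [← Real.exp_add]; ring_nf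
  have hE2 : Real.exp (-(s/2)) * Real.exp (s/2) = 1 := by
    rw [← Real.exp_add]; simp
  nlinarith [Real.exp_pos (s/2), Real.exp_pos (-(s/2))]

lemma hfun_deriv_nonpos (hN : 0 < N) {t : ℝ} (ht : 0 < t) :
    -(t^2)⁻¹ - aa N * (-(aa N * Real.exp (aa N * t)) / (Real.exp (aa N * t) - 1)^2) ≤ 0 := by
  have ha := aa_pos (N := N) hN
  have hD := exp_sub_one_pos hN ht
  have hkey : (aa N * t) * Real.exp ((aa N * t)/2) ≤ Real.exp (aa N * t) - 1 :=
    sinh_ineq (by positivity)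
  have hsq : (aa N * t * Real.exp ((aa N * t)/2))^2 ≤ (Real.exp (aa N * t) - 1)^2 := by
    apply pow_le_pow_left₀ (by positivity) hkey
  have hexp : Real.exp ((aa N * t)/2) * Real.exp ((aa N * t)/2) = Real.exp (aa N * t) := by
    rw [← Real.exp_add]; ring_nf
  have h2 : aa N ^2 * Real.exp (aa N * t) * t^2 ≤ (Real.exp (aa N * t) - 1)^2 := by
    nlinarith [hsq]
  have hD2 : (0:ℝ) < (Real.exp (aa N * t) - 1)^2 := by positivity
  have ht2 : (0:ℝ) < t^2 := by positivity
  have hmain : aa N ^2 * Real.exp (aa N * t) / (Real.exp (aa N * t) - 1)^2 ≤ (t^2)⁻¹ := by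
    rw [inv_eq_one_div, div_le_div_iff₀ hD2 ht2]
    linarith [h2]
  have heq : -(t^2)⁻¹ - aa N * (-(aa N * Real.exp (aa N * t)) / (Real.exp (aa N * t) - 1)^2)
      = aa N ^2 * Real.exp (aa N * t) / (Real.exp (aa N * t) - 1)^2 - (t^2)⁻¹ := by
    ring
  rw [heq]
  linarith


lemma inner2_hasDerivAt (N : ℕ) (t : ℝ) :
    HasDerivAt (fun u : ℝ => 1 - Real.exp (-(aa N * u))) (aa N * Real.exp (-(aa N * t))) t := by
  have := (((hasDerivAt_id t).const_mul (aa N)).neg.exp).const_sub 1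
  simpa [mul_comm] using this

lemma hfun_antitone (hN : 0 < N) : AntitoneOn (hfun N) (Ioi 0) := by
  apply antitoneOn_of_deriv_nonpos (convex_Ioi 0)
  · exact fun t ht => ((hfun_hasDerivAt hN ht).continuousAt).continuousWithinAt
  · intro t ht
    rw [interior_Ioi] at ht
    exact (hfun_hasDerivAt hN ht).differentiableAt.differentiableWithinAt
  · intro t ht
    rw [interior_Ioi] at ht
    rw [(hfun_hasDerivAt hN ht).deriv]
    exact hfun_deriv_nonpos hN ht

lemma psi'_antitone (hN : 0 < N) : AntitoneOn (ψ' N) (Ioi 0) := by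
  intro x hx y hy hxy
  have h := hfun_antitone hN hx hy hxy
  have hc : (0:ℝ) ≤ (N:ℝ) - 1 := by
    have : (1:ℝ) ≤ N := by exact_mod_cast hN
    linarith
  unfold ψ'
  nlinarith

lemma exp_neg_id (N : ℕ) (t : ℝ) :
    1 - Real.exp (-(aa N * t)) = Real.exp (-(aa N * t)) * (Real.exp (aa N * t) - 1) := by
  rw [mul_sub, ← Real.exp_add]
  simp

lemma psi_hasDerivAt (hN : 0 < N) {t : ℝ} (ht : 0 < t) : HasDerivAt (ψ N) (ψ' N t) t := by
  have ha := aa_pos (N := N) hN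
  have h1e := one_sub_exp_pos hN ht
  have hlog1 : HasDerivAt (fun u : ℝ => Real.log u) t⁻¹ t := Real.hasDerivAt_log ht.ne'
  have hlog2 : HasDerivAt (fun u : ℝ => Real.log (1 - Real.exp (-(aa N * u))))
      ((aa N * Real.exp (-(aa N * t))) / (1 - Real.exp (-(aa N * t)))) t :=
    (inner2_hasDerivAt N t).log h1e.ne'
  have h := ((((hlog1.const_mul ((N:ℝ)-1)).const_add
      (Real.log (cc N) - Real.log (N * aa N))).sub
      ((hasDerivAt_id t).const_mul ((N:ℝ) - aa N))).sub (hlog2.const_mul ((N:ℝ)-1)))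
  have hkey : aa N * Real.exp (-(aa N * t)) / (1 - Real.exp (-(aa N * t)))
      = aa N * (Real.exp (aa N * t) - 1)⁻¹ := by
    rw [exp_neg_id N t, mul_comm (aa N) (Real.exp (-(aa N * t))),
      mul_div_mul_left _ _ (Real.exp_ne_zero _), div_eq_mul_inv]
  have h2 : HasDerivAt (ψ N)
      (((N:ℝ)-1)*t⁻¹ - ((N:ℝ) - aa N)*1
        - ((N:ℝ)-1)*((aa N * Real.exp (-(aa N * t))) / (1 - Real.exp (-(aa N * t))))) t := by
    apply h.congr_of_eventuallyEq
    filter_upwards with u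
    show ψ N u = _
    rw [ψ]
    rfl
  convert h2 using 1
  rw [hkey, ψ', hfun]
  ring

lemma ff_pos (hN : 0 < N) {t : ℝ} (ht : 0 < t) : 0 < ff N t := by
  have := cc_pos (N := N) hN
  rw [ff]
  positivity

lemma psi_log (hN : 0 < N) {t : ℝ} (ht : 0 < t) :
    ψ N t = Real.log (ff N t / HH' N t) := by
  have ha := aa_pos (N := N) hN
  have h1e := one_sub_exp_pos hN ht
  have hcc := cc_pos (N := N) hN
  have hNpos : (0:ℝ) < N := by exact_mod_cast hN
  have hcast : ((N-1 : ℕ):ℝ) = (N:ℝ)-1 := by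
    rw [Nat.cast_sub hN]; norm_num
  rw [Real.log_div (ff_pos hN ht).ne' (HH'_pos hN ht).ne']
  rw [ff, HH']
  rw [Real.log_mul (by positivity) (Real.exp_ne_zero _),
    Real.log_mul hcc.ne' (by positivity),
    Real.log_mul (by positivity) (by positivity),
    Real.log_mul hNpos.ne' (by positivity),
    Real.log_mul ha.ne' (Real.exp_ne_zero _),
    Real.log_pow, Real.log_pow, Real.log_exp, Real.log_exp, ψ,
    Real.log_mul hNpos.ne' ha.ne', hcast]
  ring

lemma psi_nonneg_iff (hN : 0 < N) {t : ℝ} (ht : 0 < t) :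
    0 ≤ ψ N t ↔ HH' N t ≤ ff N t := by
  rw [psi_log hN ht, Real.log_nonneg_iff (div_pos (ff_pos hN ht) (HH'_pos hN ht)),
    one_le_div (HH'_pos hN ht)]

lemma cc_eq (hN : 0 < N) : cc N = (N:ℝ) * aa N * aa N ^ (N-1) := by
  have hfac : ((N.factorial : ℕ):ℝ) = (N:ℝ) * ((N-1).factorial : ℝ) := by
    rw [← Nat.mul_factorial_pred hN.ne']
    push_cast
    ring
  have h1 : aa N * aa N ^ (N-1) = aa N ^ N := by
    rw [← pow_succ']
    congr 1
    omega
  rw [mul_assoc, h1, aa_pow hN, cc]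
  have hf1 : (0:ℝ) < ((N-1).factorial : ℝ) := by exact_mod_cast (N-1).factorial_pos
  have hf2 : (0:ℝ) < (N.factorial : ℝ) := by exact_mod_cast N.factorial_pos
  rw [hfac]
  field_simp

lemma psi_lim (hN : 0 < N) : Tendsto (ψ N) (𝓝[>] (0:ℝ)) (𝓝 0) := by
  have ha := aa_pos (N := N) hN
  have hcast : ((N-1 : ℕ):ℝ) = (N:ℝ)-1 := by
    rw [Nat.cast_sub hN]; norm_num
  -- slope limit
  have hder : HasDerivAt (fun u : ℝ => 1 - Real.exp (-(aa N * u))) (aa N) 0 := by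
    simpa using inner2_hasDerivAt N 0
  have hslope : Tendsto (fun t : ℝ => (1 - Real.exp (-(aa N * t)))/t) (𝓝[>] (0:ℝ)) (𝓝 (aa N)) := by
    have h1 := hasDerivAt_iff_tendsto_slope.mp hder
    have h2 : Tendsto (slope (fun u : ℝ => 1 - Real.exp (-(aa N * u))) 0) (𝓝[>] (0:ℝ))
        (𝓝 (aa N)) := h1.mono_left (nhdsWithin_mono 0 (fun x hx => ne_of_gt hx))
    apply h2.congr
    intro x
    rw [slope_def_field]
    simp [div_eq_mul_inv]
  have hlog : Tendsto (fun t : ℝ => Real.log ((1 - Real.exp (-(aa N * t)))/t)) (𝓝[>] (0:ℝ))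
      (𝓝 (Real.log (aa N))) := ((Real.continuousAt_log ha.ne').tendsto).comp hslope
  have hlin : Tendsto (fun t : ℝ => ((N:ℝ) - aa N) * t) (𝓝[>] (0:ℝ)) (𝓝 0) := by
    have : Tendsto (fun t : ℝ => ((N:ℝ) - aa N) * t) (𝓝 (0:ℝ)) (𝓝 (((N:ℝ) - aa N) * 0)) :=
      (continuous_const.mul continuous_id).tendsto 0
    simpa using this.mono_left nhdsWithin_le_nhds
  have hmain : Tendsto (fun t : ℝ => ((N:ℝ)-1) * (Real.log (aa N)
      - Real.log ((1 - Real.exp (-(aa N * t)))/t)) - ((N:ℝ) - aa N) * t) (𝓝[>] (0:ℝ))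
      (𝓝 (((N:ℝ)-1) * (Real.log (aa N) - Real.log (aa N)) - 0)) :=
    ((tendsto_const_nhds.sub hlog).const_mul _).sub hlin
  rw [show ((N:ℝ)-1) * (Real.log (aa N) - Real.log (aa N)) - 0 = 0 by ring] at hmain
  apply hmain.congr'
  filter_upwards [self_mem_nhdsWithin] with t (ht : 0 < t)
  have h1e := one_sub_exp_pos hN ht
  have hK : Real.log (cc N) - Real.log ((N:ℝ) * aa N) = ((N:ℝ)-1) * Real.log (aa N) := by
    rw [cc_eq hN, Real.log_mul (by positivity) (by positivity), Real.log_pow, hcast]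
    ring
  rw [ψ, hK, Real.log_div h1e.ne' ht.ne']
  ring

lemma psi_propagate (hN : 0 < N) {s t : ℝ} (hs : 0 < s) (hst : s ≤ t) (hψs : ψ N s < 0) :
    ψ N t < 0 := by
  by_contra hcon
  push_neg at hcon
  have hlt : s < t := lt_of_le_of_ne hst (by rintro rfl; linarith)
  have hcont : ContinuousOn (ψ N) (Icc s t) := fun u hu =>
    ((psi_hasDerivAt hN (lt_of_lt_of_le hs hu.1)).continuousAt).continuousWithinAt
  obtain ⟨ξ, hξ, hval⟩ := exists_hasDerivAt_eq_slope (ψ N) (ψ' N) hlt hcont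
    (fun x hx => psi_hasDerivAt hN (hs.trans hx.1))
  have hξpos : 0 < ψ' N ξ := by
    rw [hval]
    apply div_pos (by linarith) (by linarith)
  have hmono : StrictMonoOn (ψ N) (Ioc 0 s) := by
    apply strictMonoOn_of_deriv_pos (convex_Ioc 0 s)
    · exact fun u hu => ((psi_hasDerivAt hN hu.1).continuousAt).continuousWithinAt
    · intro u hu
      rw [interior_Ioc] at hu
      rw [(psi_hasDerivAt hN hu.1).deriv]
      have : ψ' N ξ ≤ ψ' N u := psi'_antitone hN hu.1 (hs.trans hξ.1) (by linarith [hu.2, hξ.1])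
      linarith
  have hev1 : ∀ᶠ u in 𝓝[>] (0:ℝ), ψ N s < ψ N u :=
    (psi_lim hN).eventually (eventually_gt_nhds hψs)
  have hev2 : ∀ᶠ u in 𝓝[>] (0:ℝ), u ∈ Ioo 0 s :=
    Ioo_mem_nhdsGT_of_mem ⟨le_refl 0, hs⟩
  obtain ⟨u, hu1, hu2⟩ := (hev1.and hev2).exists
  have := hmono ⟨hu2.1, hu2.2.le⟩ ⟨hs, le_refl s⟩ hu2.2
  linarith


lemma HH_cont : Continuous (HH N) := by
  unfold HH
  fun_prop

lemma HH_le_FF (hN : 0 < N) {t : ℝ} (ht : 0 ≤ t) : HH N t ≤ FF N t := by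
  have hH0 : HH N 0 = 0 := by simp [HH, zero_pow hN.ne']
  have hF0 : FF N 0 = 0 := by simp [FF]
  rcases eq_or_lt_of_le ht with rfl | htpos
  · rw [hH0, hF0]
  rw [← sub_nonneg]
  set G : ℝ → ℝ := fun u => FF N u - HH N u with hG
  show 0 ≤ G t
  have hGderiv : ∀ u : ℝ, 0 < u → HasDerivAt G (ff N u - HH' N u) u :=
    fun u hu => (FF_hasDerivAt hN hu).sub (HH_hasDerivAt u)
  have hGcont : Continuous G := (FF_cont hN).sub HH_cont
  by_cases hψ : 0 ≤ ψ N t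
  · have hmono : MonotoneOn G (Icc 0 t) := by
      apply monotoneOn_of_deriv_nonneg (convex_Icc 0 t) hGcont.continuousOn
      · intro u hu
        rw [interior_Icc] at hu
        exact (hGderiv u hu.1).differentiableAt.differentiableWithinAt
      · intro u hu
        rw [interior_Icc] at hu
        rw [(hGderiv u hu.1).deriv, sub_nonneg]
        have hψu : 0 ≤ ψ N u := by
          by_contra hneg
          push_neg at hneg
          exact absurd (psi_propagate hN hu.1 hu.2.le hneg) (not_lt.mpr hψ)
        exact (psi_nonneg_iff hN hu.1).mp hψu
    have h := hmono (left_mem_Icc.mpr ht) ⟨ht, le_refl t⟩ ht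
    have hG0 : G 0 = 0 := by simp [hG, hH0, hF0]
    linarith
  · push_neg at hψ
    have hanti : AntitoneOn G (Ici t) := by
      apply antitoneOn_of_deriv_nonpos (convex_Ici t) hGcont.continuousOn
      · intro u hu
        rw [interior_Ici] at hu
        exact (hGderiv u (htpos.trans hu)).differentiableAt.differentiableWithinAt
      · intro u hu
        rw [interior_Ici] at hu
        have hupos : 0 < u := htpos.trans hu
        rw [(hGderiv u hupos).deriv, sub_nonpos]
        have hψu : ψ N u < 0 := psi_propagate hN htpos hu.le hψ
        have h2 : ¬ HH' N u ≤ ff N u :=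
          fun hle => absurd ((psi_nonneg_iff hN hupos).mpr hle) (not_le.mpr hψu)
        linarith [not_le.mp h2]
    have hGlim : Tendsto G atTop (𝓝 0) := by
      have := (FF_tendsto_one hN).sub (HH_tendsto_one hN)
      simpa using this
    apply le_of_tendsto hGlim
    filter_upwards [eventually_ge_atTop t] with u hu
    exact hanti (mem_Ici.mpr (le_refl t)) (mem_Ici.mpr hu) hu

lemma gamma_Ioi_le (hN : 0 < N) {t : ℝ} (ht : 0 ≤ t) :
    gammaMeasure (N:ℝ) (N:ℝ) (Ioi t) ≤ ENNReal.ofReal (1 - HH N t) := by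
  have hNpos : (0:ℝ) < N := by exact_mod_cast hN
  have : IsProbabilityMeasure (gammaMeasure (N:ℝ) (N:ℝ)) :=
    isProbabilityMeasure_gammaMeasure hNpos hNpos
  rw [← compl_Iic, prob_compl_eq_one_sub measurableSet_Iic]
  have hFF : gammaMeasure (N:ℝ) (N:ℝ) (Iic t) = ENNReal.ofReal (FF N t) := by
    rw [← FF_eq_measure hN ht, ENNReal.ofReal_toReal (measure_ne_top _ _)]
  rw [hFF, ← ENNReal.ofReal_one, ← ENNReal.ofReal_sub _ (by
    rw [← FF_eq_measure hN ht]; exact ENNReal.toReal_nonneg)]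
  exact ENNReal.ofReal_le_ofReal (by linarith [HH_le_FF hN ht])


lemma binom_id (N : ℕ) (u : ℝ) :
    1 - (1 - u)^N = ∑ n ∈ Finset.Icc 1 N, (-1:ℝ)^(n+1) * (N.choose n : ℝ) * u^n := by
  have h := add_pow (-u) (1:ℝ) N
  simp only [one_pow, mul_one] at h
  have h0 : (0:ℕ) ∈ Finset.range (N+1) := Finset.mem_range.mpr (Nat.succ_pos N)
  have hers : (Finset.range (N+1)).erase 0 = Finset.Icc 1 N := by
    ext m
    simp [Nat.lt_succ_iff]
    omega
  have hsplit := (Finset.add_sum_erase _ (fun k => (-u)^k * (N.choose k : ℝ)) h0).symm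
  rw [hers] at hsplit
  simp only [pow_zero, Nat.choose_zero_right, Nat.cast_one, one_mul] at hsplit
  have hneg : ∑ k ∈ Finset.Icc 1 N, (-u)^k * (N.choose k : ℝ)
      = -∑ n ∈ Finset.Icc 1 N, (-1:ℝ)^(n+1) * (N.choose n : ℝ) * u^n := by
    rw [← Finset.sum_neg_distrib]
    apply Finset.sum_congr rfl
    intro n _
    rw [neg_pow]
    ring
  rw [show (1:ℝ) - u = -u + 1 by ring, h, hsplit, hneg]
  ring

end SmoothedAux


open SmoothedAux in
/-- **Alternating-sum upper bound on the Gamma-smoothed interference CDF.**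
Let `I` be a nonnegative random variable, `τ > 0`, `N` a positive integer,
`a_N = N·(N!)^{−1/N}`, and let `g` be a normalized-Gamma(`N`) random variable
independent of `I`.  Then
`P(I < τ·g) ≤ Σ_{n=1}^{N} (−1)^{n+1} · binom(N, n) · E[exp(−a_N n I / τ)]`. -/
theorem smoothed_cdf_upper_bound
    {Ω : Type*} [MeasurableSpace Ω] (P : Measure Ω) [IsProbabilityMeasure P]
    (I g : Ω → ℝ) (hI : Measurable I) (hg : Measurable g)
    (hI0 : ∀ ω, 0 ≤ I ω)
    (τ : ℝ) (hτ : 0 < τ) (N : ℕ) (hN : 0 < N)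
    (hlaw : Measure.map g P = gammaMeasure (N : ℝ) (N : ℝ))
    (hindep : IndepFun I g P) :
    (P {ω | I ω < τ * g ω}).toReal
      ≤ ∑ n ∈ Finset.Icc 1 N, (-1 : ℝ) ^ (n + 1) * (N.choose n : ℝ) *
          ∫ ω, Real.exp (-((N * ((N.factorial : ℝ) ^ (-(1 : ℝ) / N))) * n * I ω) / τ) ∂P := by
  classical
  have hNpos : (0:ℝ) < N := by exact_mod_cast hN
  have hγprob : IsProbabilityMeasure (gammaMeasure (N:ℝ) (N:ℝ)) :=
    isProbabilityMeasure_gammaMeasure hNpos hNpos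
  have ha := aa_pos (N := N) hN
  set μ := Measure.map I P with hμ
  have hμprob : IsProbabilityMeasure μ := Measure.isProbabilityMeasure_map hI.aemeasurable
  set en : ℕ → ℝ → ℝ := fun n x => Real.exp (-(aa N * n * x) / τ) with hen
  set B : ℝ → ℝ := fun x => 1 - (1 - Real.exp (-(aa N * x) / τ))^N with hB
  -- joint law
  have hmap : Measure.map (fun ω => (I ω, g ω)) P = μ.prod (gammaMeasure (N:ℝ) (N:ℝ)) := by
    rw [← hlaw]
    exact (indepFun_iff_map_prod_eq_prod_map_map hI.aemeasurable hg.aemeasurable).mp hindep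
  have hsetm : MeasurableSet {p : ℝ × ℝ | p.1 < τ * p.2} :=
    measurableSet_lt measurable_fst (measurable_snd.const_mul τ)
  have hP : P {ω | I ω < τ * g ω} = (μ.prod (gammaMeasure (N:ℝ) (N:ℝ))) {p : ℝ × ℝ | p.1 < τ * p.2} := by
    rw [← hmap, Measure.map_apply (hI.prodMk hg) hsetm]
    rfl
  have hprod : (μ.prod (gammaMeasure (N:ℝ) (N:ℝ))) {p : ℝ × ℝ | p.1 < τ * p.2}
      = ∫⁻ x, gammaMeasure (N:ℝ) (N:ℝ) (Ioi (x/τ)) ∂μ := by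
    rw [Measure.prod_apply hsetm]
    congr 1
    funext x
    congr 1
    ext y
    simp only [mem_preimage, mem_setOf_eq, mem_Ioi]
    rw [div_lt_iff₀ hτ, mul_comm]
  have hae : ∀ᵐ x ∂μ, 0 ≤ x := by
    rw [hμ, ae_map_iff hI.aemeasurable (measurableSet_Ici (a := (0:ℝ)))]
    exact ae_of_all _ hI0
  have hB01 : ∀ x : ℝ, 0 ≤ x → 0 ≤ B x ∧ B x ≤ 1 := by
    intro x hx
    have hu1 : Real.exp (-(aa N * x) / τ) ≤ 1 := by
      rw [Real.exp_le_one_iff]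
      exact div_nonpos_of_nonpos_of_nonneg (neg_nonpos.mpr (by positivity)) hτ.le
    have hu0 : 0 < Real.exp (-(aa N * x) / τ) := Real.exp_pos _
    constructor
    · have : (1 - Real.exp (-(aa N * x) / τ))^N ≤ 1 :=
        pow_le_one₀ (by linarith) (by linarith)
      simp only [hB]
      linarith
    · have : 0 ≤ (1 - Real.exp (-(aa N * x) / τ))^N := pow_nonneg (by linarith) N
      simp only [hB]
      linarith
  have hbound : ∫⁻ x, gammaMeasure (N:ℝ) (N:ℝ) (Ioi (x/τ)) ∂μ
      ≤ ∫⁻ x, ENNReal.ofReal (B x) ∂μ := by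
    apply lintegral_mono_ae
    filter_upwards [hae] with x hx
    have h := gamma_Ioi_le (N := N) hN (t := x/τ) (div_nonneg hx hτ.le)
    have hBH : B x = 1 - HH N (x/τ) := by
      simp only [hB, HH]
      rw [show -(aa N * (x/τ)) = -(aa N * x) / τ by ring]
    rw [hBH]
    exact h
  have hBmeas : Measurable B := by
    simp only [hB]
    fun_prop
  have h1 : P {ω | I ω < τ * g ω} ≤ ∫⁻ x, ENNReal.ofReal (B x) ∂μ := by
    rw [hP, hprod]; exact hbound
  have hfin : ∫⁻ x, ENNReal.ofReal (B x) ∂μ ≤ 1 := by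
    calc ∫⁻ x, ENNReal.ofReal (B x) ∂μ ≤ ∫⁻ _, 1 ∂μ := by
          apply lintegral_mono_ae
          filter_upwards [hae] with x hx
          exact ENNReal.ofReal_le_one.mpr (hB01 x hx).2
      _ = 1 := by simp
  have h2 : (P {ω | I ω < τ * g ω}).toReal ≤ (∫⁻ x, ENNReal.ofReal (B x) ∂μ).toReal :=
    ENNReal.toReal_mono (hfin.trans_lt ENNReal.one_lt_top).ne h1
  have h3 : (∫⁻ x, ENNReal.ofReal (B x) ∂μ).toReal = ∫ x, B x ∂μ :=
    (integral_eq_lintegral_of_nonneg_ae (by filter_upwards [hae] with x hx; exact (hB01 x hx).1)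
      hBmeas.aestronglyMeasurable).symm
  have hBsum : ∀ x : ℝ, B x = ∑ n ∈ Finset.Icc 1 N,
      ((-1:ℝ)^(n+1) * (N.choose n : ℝ)) * en n x := by
    intro x
    simp only [hB]
    rw [binom_id]
    apply Finset.sum_congr rfl
    intro n _
    simp only [hen]
    rw [← Real.exp_nat_mul]
    congr 2
    ring
  have hen_meas : ∀ n : ℕ, Measurable (en n) := by
    intro n
    simp only [hen]
    fun_prop
  have hen_int : ∀ n : ℕ, Integrable (en n) μ := by
    intro n
    apply Integrable.mono' (integrable_const (1:ℝ)) (hen_meas n).aestronglyMeasurable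
    filter_upwards [hae] with x hx
    rw [Real.norm_eq_abs, abs_of_pos (Real.exp_pos _), Real.exp_le_one_iff]
    exact div_nonpos_of_nonpos_of_nonneg (neg_nonpos.mpr (by positivity)) hτ.le
  have h4 : ∫ x, B x ∂μ = ∑ n ∈ Finset.Icc 1 N,
      ((-1:ℝ)^(n+1) * (N.choose n : ℝ)) * ∫ x, en n x ∂μ := by
    rw [integral_congr_ae (ae_of_all _ hBsum), integral_finset_sum _
      (fun n _ => ((hen_int n).const_mul _))]
    exact Finset.sum_congr rfl fun n _ => integral_const_mul _ _
  have h5 : ∀ n : ℕ, ∫ x, en n x ∂μ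
      = ∫ ω, Real.exp (-((N * ((N.factorial : ℝ) ^ (-(1 : ℝ) / N))) * n * I ω) / τ) ∂P := by
    intro n
    rw [hμ, integral_map hI.aemeasurable (hen_meas n).aestronglyMeasurable]
    rfl
  calc (P {ω | I ω < τ * g ω}).toReal
      ≤ (∫⁻ x, ENNReal.ofReal (B x) ∂μ).toReal := h2
    _ = ∫ x, B x ∂μ := h3
    _ = ∑ n ∈ Finset.Icc 1 N, ((-1:ℝ)^(n+1) * (N.choose n : ℝ)) * ∫ x, en n x ∂μ := h4
    _ = _ := by
        apply Finset.sum_congr rfl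
        intro n _
        rw [h5 n, mul_assoc]
end

section
/- Let I be a nonnegative random variable on a probability space (Ω, 𝒜, P), let τ > 0, let N be a positive integer, and let g be a normalized-Gamma(N) random variable independent of I. Then P(I < τ·g) ≥ Σ_{n=1}^{N} (−1)^{n+1} · binom(N, n) · E[exp(−N n I / τ)]. -/
open MeasureTheory ProbabilityTheory Set

section AuxScalar

private lemma hasDerivAt_partial_sum (N : ℕ) (x : ℝ) :
    HasDerivAt (fun x : ℝ => ∑ k ∈ Finset.range (N+1), x^k / k.factorial)
      (∑ k ∈ Finset.range N, x^k / k.factorial) x := by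
  have h : HasDerivAt (fun x : ℝ => ∑ k ∈ Finset.range (N+1), x^k / k.factorial)
      (∑ k ∈ Finset.range (N+1), (k : ℝ) * x^(k-1) / k.factorial) x := by
    apply HasDerivAt.fun_sum
    intro k _
    simpa [div_eq_mul_inv, mul_comm, mul_assoc, mul_left_comm] using
      ((hasDerivAt_pow k x).div_const (k.factorial : ℝ))
  convert h using 1
  rw [Finset.sum_range_succ']
  simp only [Nat.cast_zero, zero_mul, zero_div, add_zero]
  apply Finset.sum_congr rfl
  intro i _
  rw [Nat.factorial_succ, Nat.add_sub_cancel]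
  push_cast
  field_simp

private lemma hasDerivAt_A (m : ℕ) (x : ℝ) :
    HasDerivAt (fun x : ℝ => 1 - Real.exp (-x) * ∑ k ∈ Finset.range (m+1), x^k / k.factorial)
      (Real.exp (-x) * x^m / m.factorial) x := by
  have he : HasDerivAt (fun x : ℝ => Real.exp (-x)) (-Real.exp (-x)) x := by
    exact ((hasDerivAt_neg x).exp).congr_deriv (by ring)
  have hp := hasDerivAt_partial_sum m x
  have hprod := he.mul hp
  have h1 := (hasDerivAt_const x (1:ℝ)).sub hprod
  refine h1.congr_deriv ?_
  rw [Finset.sum_range_succ]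
  field_simp
  ring

private lemma hasDerivAt_B (m : ℕ) (x : ℝ) :
    HasDerivAt (fun x : ℝ => (1 - Real.exp (-x))^(m+1))
      ((m+1 : ℝ) * Real.exp (-x) * (1 - Real.exp (-x))^m) x := by
  have he : HasDerivAt (fun x : ℝ => 1 - Real.exp (-x)) (Real.exp (-x)) x := by
    exact ((hasDerivAt_const x (1:ℝ)).sub (hasDerivAt_neg x).exp).congr_deriv (by ring)
  have := (hasDerivAt_pow (m+1) (1 - Real.exp (-x))).comp x he
  refine this.congr_deriv ?_
  push_cast
  ring

private lemma phi_hasDeriv {x : ℝ} (hx : 0 < x) :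
    HasDerivAt (fun x : ℝ => (1 - Real.exp (-x))/x)
      ((Real.exp (-x) * x - (1 - Real.exp (-x)))/x^2) x := by
  have he : HasDerivAt (fun x : ℝ => 1 - Real.exp (-x)) (Real.exp (-x)) x := by
    exact ((hasDerivAt_const x (1:ℝ)).sub (hasDerivAt_neg x).exp).congr_deriv (by ring)
  have := he.div (hasDerivAt_id x) hx.ne'
  exact this.congr_deriv (by simp)

private lemma phi_antitone : AntitoneOn (fun x : ℝ => (1 - Real.exp (-x))/x) (Ioi 0) := by
  have hint : interior (Ioi (0:ℝ)) = Ioi 0 := isOpen_Ioi.interior_eq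
  apply antitoneOn_of_deriv_nonpos (convex_Ioi 0)
  · intro x hx
    exact ((phi_hasDeriv hx).continuousAt).continuousWithinAt
  · rw [hint]
    intro x hx
    exact (phi_hasDeriv hx).differentiableAt.differentiableWithinAt
  · rw [hint]
    intro x hx
    rw [(phi_hasDeriv hx).deriv]
    apply div_nonpos_of_nonpos_of_nonneg _ (sq_nonneg x)
    have h1 : x + 1 ≤ Real.exp x := Real.add_one_le_exp x
    have h2 : Real.exp (-x) * (x + 1) ≤ 1 := by
      rw [Real.exp_neg]
      rw [inv_mul_le_iff₀ (Real.exp_pos x), mul_one]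
      linarith
    nlinarith [Real.exp_pos (-x)]

private lemma tendsto_D (N : ℕ) : Filter.Tendsto
    (fun x : ℝ => (1 - Real.exp (-x))^N
      - (1 - Real.exp (-x) * ∑ k ∈ Finset.range N, x^k / k.factorial))
    Filter.atTop (nhds 0) := by
  have he : Filter.Tendsto (fun x : ℝ => Real.exp (-x)) Filter.atTop (nhds 0) := by
    simpa using Real.tendsto_exp_comp_nhds_zero.mpr Filter.tendsto_neg_atTop_atBot
  have hB : Filter.Tendsto (fun x : ℝ => (1 - Real.exp (-x))^N) Filter.atTop (nhds 1) := by
    have := ((tendsto_const_nhds (x := (1:ℝ))).sub he).pow N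
    simpa using this
  have hA : Filter.Tendsto
      (fun x : ℝ => Real.exp (-x) * ∑ k ∈ Finset.range N, x^k / k.factorial)
      Filter.atTop (nhds 0) := by
    have heq : ∀ x : ℝ, Real.exp (-x) * ∑ k ∈ Finset.range N, x^k / k.factorial
        = ∑ k ∈ Finset.range N, (x^k * Real.exp (-x)) / k.factorial := by
      intro x; rw [Finset.mul_sum]; apply Finset.sum_congr rfl; intros; ring
    simp_rw [heq]
    have h0 : Filter.Tendsto
        (fun x : ℝ => ∑ k ∈ Finset.range N, (x^k * Real.exp (-x)) / k.factorial)
        Filter.atTop (nhds (∑ k ∈ Finset.range N, 0)) := by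
      apply tendsto_finset_sum
      intro k _
      have := Real.tendsto_pow_mul_exp_neg_atTop_nhds_zero k
      simpa using this.div_const (k.factorial : ℝ)
    simpa using h0
  have := hB.sub ((tendsto_const_nhds (x := (1:ℝ))).sub hA)
  simpa using this

private lemma A_le_B_aux (m : ℕ) (hm : 0 < m) {x : ℝ} (hx : 0 ≤ x) :
    1 - Real.exp (-x) * ∑ k ∈ Finset.range (m+1), x^k / k.factorial
      ≤ (1 - Real.exp (-x))^(m+1) := by
  set D : ℝ → ℝ := fun x =>
    (1 - Real.exp (-x))^(m+1) - (1 - Real.exp (-x) * ∑ k ∈ Finset.range (m+1), x^k / k.factorial)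
    with hDdef
  have hD0 : D 0 = 0 := by
    simp [hDdef, Finset.sum_range_succ']
  have hD' : ∀ x : ℝ, HasDerivAt D
      (Real.exp (-x) * (((m:ℝ)+1) * (1 - Real.exp (-x))^m - x^m / m.factorial)) x := by
    intro x
    have := (hasDerivAt_B m x).sub (hasDerivAt_A m x)
    refine this.congr_deriv ?_
    push_cast
    ring
  set θ : ℝ := (1 / ((m+1).factorial : ℝ)) ^ ((m : ℝ)⁻¹) with hθdef
  have hfacpos : (0:ℝ) < (m+1).factorial := by positivity
  have hθpos : 0 < θ := Real.rpow_pos_of_pos (by positivity) _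
  have hθlt1 : θ < 1 := by
    apply Real.rpow_lt_one (by positivity)
    · rw [div_lt_one hfacpos]
      have h2 : 2 ≤ (m+1).factorial := by
        have : 2 ≤ m + 1 := by omega
        calc 2 = Nat.factorial 2 := rfl
        _ ≤ (m+1).factorial := Nat.factorial_le this
      exact_mod_cast by linarith
    · positivity
  have hθm : θ ^ m = 1 / ((m+1).factorial : ℝ) := by
    rw [hθdef, ← Real.rpow_natCast (_ ^ _) m, ← Real.rpow_mul (by positivity),
      inv_mul_cancel₀ (by exact_mod_cast hm.ne'), Real.rpow_one]
  set S : Set ℝ := {x : ℝ | 0 < x ∧ θ ≤ (1 - Real.exp (-x))/x} with hSdef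
  have hbdd : BddAbove S := by
    refine ⟨1/θ, fun y hy => ?_⟩
    obtain ⟨hy0, hyθ⟩ := hy
    rw [le_div_iff₀ hy0] at hyθ
    have hey : Real.exp (-y) > 0 := Real.exp_pos _
    rw [le_div_iff₀ hθpos]
    nlinarith
  have hne : S.Nonempty := by
    refine ⟨-Real.log θ, ?_, ?_⟩
    · simp only [neg_pos]
      exact Real.log_neg hθpos hθlt1
    · rw [neg_neg, Real.exp_log hθpos]
      have h1 := Real.add_one_le_exp (-Real.log θ)
      have hx0 : 0 < -Real.log θ := by simpa using Real.log_neg hθpos hθlt1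
      rw [le_div_iff₀ hx0]
      have h3 : Real.exp (-Real.log θ) * θ = 1 := by
        rw [Real.exp_neg, Real.exp_log hθpos, inv_mul_cancel₀ hθpos.ne']
      nlinarith [mul_le_mul_of_nonneg_right h1 hθpos.le, h3]
  set c : ℝ := sSup S with hcdef
  have hc0 : 0 < c := by
    obtain ⟨s, hs⟩ := hne
    exact lt_of_lt_of_le hs.1 (le_csSup hbdd hs)
  have one_sub_exp_nonneg : ∀ y : ℝ, 0 ≤ y → 0 ≤ 1 - Real.exp (-y) := by
    intro y hy
    have : Real.exp (-y) ≤ 1 := Real.exp_le_one_iff.mpr (by linarith)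
    linarith
  have hmono : MonotoneOn D (Icc 0 c) := by
    apply monotoneOn_of_deriv_nonneg (convex_Icc 0 c)
    · exact fun y _ => ((hD' y).continuousAt).continuousWithinAt
    · rw [interior_Icc]
      exact fun y _ => (hD' y).differentiableAt.differentiableWithinAt
    · rw [interior_Icc]
      intro y hy
      rw [(hD' y).deriv]
      apply mul_nonneg (Real.exp_pos _).le
      obtain ⟨s, hsS, hys⟩ := exists_lt_of_lt_csSup hne hy.2
      have hφ : θ ≤ (1 - Real.exp (-y))/y :=
        le_trans hsS.2 (phi_antitone hy.1 hsS.1 hys.le)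
      have h1 : θ * y ≤ 1 - Real.exp (-y) := by
        rw [le_div_iff₀ hy.1] at hφ; linarith
      have h2 : (θ * y)^m ≤ (1 - Real.exp (-y))^m :=
        pow_le_pow_left₀ (mul_nonneg hθpos.le hy.1.le) h1 m
      rw [mul_pow, hθm] at h2
      have h4 : ((m:ℝ)+1) * (1 / ((m+1).factorial:ℝ) * y^m) = y^m / m.factorial := by
        rw [Nat.factorial_succ]
        push_cast
        field_simp
      nlinarith [(Nat.cast_pos (α := ℝ)).mpr (Nat.factorial_pos m), h2]
  have hanti : AntitoneOn D (Ici c) := by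
    apply antitoneOn_of_deriv_nonpos (convex_Ici c)
    · exact fun y _ => ((hD' y).continuousAt).continuousWithinAt
    · rw [interior_Ici]
      exact fun y _ => (hD' y).differentiableAt.differentiableWithinAt
    · rw [interior_Ici]
      intro y hy
      rw [(hD' y).deriv]
      apply mul_nonpos_of_nonneg_of_nonpos (Real.exp_pos _).le
      have hy0 : 0 < y := lt_trans hc0 hy
      have hyS : y ∉ S := fun hmem => absurd (le_csSup hbdd hmem) (not_le.mpr hy)
      have hφ : (1 - Real.exp (-y))/y < θ := by
        by_contra h
        exact hyS ⟨hy0, not_lt.mp h⟩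
      have h1 : 1 - Real.exp (-y) ≤ θ * y := by
        rw [div_lt_iff₀ hy0] at hφ; linarith
      have h2 : (1 - Real.exp (-y))^m ≤ (θ * y)^m :=
        pow_le_pow_left₀ (one_sub_exp_nonneg y hy0.le) h1 m
      rw [mul_pow, hθm] at h2
      have h4 : ((m:ℝ)+1) * (1 / ((m+1).factorial:ℝ) * y^m) = y^m / m.factorial := by
        rw [Nat.factorial_succ]
        push_cast
        field_simp
      nlinarith [(Nat.cast_pos (α := ℝ)).mpr (Nat.factorial_pos m), h2]
  have hlim : Filter.Tendsto D Filter.atTop (nhds 0) := tendsto_D (m+1)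
  have hDnonneg : 0 ≤ D x := by
    rcases le_or_gt x c with hxc | hxc
    · rw [← hD0]
      exact hmono ⟨le_refl 0, hc0.le⟩ ⟨hx, hxc⟩ hx
    · apply le_of_tendsto hlim
      filter_upwards [Filter.eventually_ge_atTop x] with t ht
      exact hanti (le_of_lt hxc) (le_trans hxc.le ht) ht
  simpa [hDdef] using hDnonneg

private lemma A_le_B (N : ℕ) (hN : 0 < N) {x : ℝ} (hx : 0 ≤ x) :
    1 - Real.exp (-x) * ∑ k ∈ Finset.range N, x^k / k.factorial
      ≤ (1 - Real.exp (-x))^N := by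
  obtain ⟨m, rfl⟩ : ∃ m, N = m + 1 := ⟨N - 1, by omega⟩
  rcases Nat.eq_zero_or_pos m with rfl | hm
  · simp
  · exact A_le_B_aux m hm hx

private lemma gammaPDFReal_eq_G (N : ℕ) (hN : 0 < N) {t : ℝ} (ht : 0 ≤ t) :
    gammaPDFReal N N t
      = (N:ℝ)^N * t^(N-1) * Real.exp (-((N:ℝ)*t)) / (N-1).factorial := by
  obtain ⟨m, rfl⟩ : ∃ m, N = m + 1 := ⟨N - 1, by omega⟩
  rw [gammaPDFReal, if_pos ht]
  have hΓ : Real.Gamma ((m+1 : ℕ) : ℝ) = (m.factorial : ℝ) := by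
    push_cast
    rw [Real.Gamma_nat_eq_factorial]
  have hpow : ((m+1:ℕ):ℝ) ^ ((m+1:ℕ):ℝ) = ((m+1:ℕ):ℝ) ^ ((m+1 : ℕ)) := by
    rw [Real.rpow_natCast]
  have hxpow : t ^ (((m+1:ℕ):ℝ) - 1) = t ^ (m:ℕ) := by
    rcases eq_or_lt_of_le ht with h0 | h0
    · rcases Nat.eq_zero_or_pos m with rfl | hm
      · simp
      · rw [← h0]
        rw [Real.zero_rpow (by push_cast; simp; omega), zero_pow hm.ne']
    · rw [show (((m+1:ℕ):ℝ) - 1) = ((m:ℕ):ℝ) by push_cast; ring, Real.rpow_natCast]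
  rw [hΓ, hpow, hxpow]
  simp only [Nat.add_sub_cancel]
  ring

private lemma gamma_Iic_le (N : ℕ) (hN : 0 < N) {z : ℝ} (hz : 0 ≤ z) :
    gammaMeasure (N:ℝ) (N:ℝ) (Iic z)
      ≤ ENNReal.ofReal ((1 - Real.exp (-((N:ℝ) * z)))^N) := by
  obtain ⟨m, rfl⟩ : ∃ m, N = m + 1 := ⟨N - 1, by omega⟩
  set N := m + 1 with hm
  have hNpos : (0:ℝ) < N := by exact_mod_cast hN
  -- the explicit density
  set G' : ℝ → ℝ := fun t => (N:ℝ)^N * t^(N-1) * Real.exp (-((N:ℝ)*t)) / (N-1).factorial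
    with hG'def
  have hG'cont : Continuous G' := by fun_prop
  have hG'nonneg : ∀ t, 0 ≤ t → 0 ≤ G' t := by
    intro t ht; rw [hG'def]; positivity
  -- antiderivative
  set F : ℝ → ℝ := fun t =>
    1 - Real.exp (-((N:ℝ)*t)) * ∑ k ∈ Finset.range N, ((N:ℝ)*t)^k / k.factorial with hFdef
  have hF : ∀ t : ℝ, HasDerivAt F (G' t) t := by
    intro t
    have hinner : HasDerivAt (fun t : ℝ => (N:ℝ)*t) (N:ℝ) t := by
      simpa using (hasDerivAt_id t).const_mul (N:ℝ)
    have houter := hasDerivAt_A m ((N:ℝ)*t)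
    have := houter.comp t hinner
    refine this.congr_deriv ?_
    symm
    rw [hG'def]
    show _ = Real.exp (-((N:ℝ)*t)) * ((N:ℝ)*t)^m / m.factorial * (N:ℝ)
    simp only [hm, Nat.add_sub_cancel]
    rw [mul_pow]
    push_cast
    ring
  -- FTC
  have hFTC : ∫ t in (0:ℝ)..z, G' t = F z - F 0 := by
    apply intervalIntegral.integral_eq_sub_of_hasDerivAt
    · intro t _; exact hF t
    · exact hG'cont.intervalIntegrable 0 z
  have hF0 : F 0 = 0 := by
    rw [hFdef]
    simp [Finset.sum_range_succ', hm]
  -- value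
  have hval : ∫ t in Icc (0:ℝ) z, gammaPDFReal N N t = F z := by
    rw [setIntegral_congr_fun measurableSet_Icc
      (fun t ht => gammaPDFReal_eq_G N hN ht.1)]
    rw [integral_Icc_eq_integral_Ioc, ← intervalIntegral.integral_of_le hz, hFTC, hF0, sub_zero]
  -- lintegral
  have hint : IntegrableOn (gammaPDFReal N N) (Icc 0 z) := by
    apply (hG'cont.integrableOn_Icc).congr_fun (fun t ht => (gammaPDFReal_eq_G N hN ht.1).symm)
      measurableSet_Icc
  have hlin : ∫⁻ t in Icc (0:ℝ) z, gammaPDF N N t = ENNReal.ofReal (F z) := by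
    have h := ofReal_integral_eq_lintegral_ofReal hint
      (Filter.Eventually.of_forall fun t => gammaPDFReal_nonneg hNpos hNpos t)
    simp only [gammaPDF]
    rw [← h, hval]
  have hsplit : gammaMeasure (N:ℝ) (N:ℝ) (Iic z)
      = ∫⁻ t in Icc (0:ℝ) z, gammaPDF N N t := by
    rw [gammaMeasure, withDensity_apply _ measurableSet_Iic,
      lintegral_Iic_eq_lintegral_Iio_add_Icc _ hz, lintegral_gammaPDF_of_nonpos le_rfl, zero_add]
  rw [hsplit, hlin]
  apply ENNReal.ofReal_le_ofReal
  have := A_le_B N hN (x := (N:ℝ)*z) (by positivity)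
  rw [hFdef]
  simpa using this

private lemma gamma_Ioi_ge (N : ℕ) (hN : 0 < N) {z : ℝ} (hz : 0 ≤ z) :
    ENNReal.ofReal (1 - (1 - Real.exp (-((N:ℝ) * z)))^N)
      ≤ gammaMeasure (N:ℝ) (N:ℝ) (Ioi z) := by
  have hNpos : (0:ℝ) < N := by exact_mod_cast hN
  have : IsProbabilityMeasure (gammaMeasure (N:ℝ) (N:ℝ)) :=
    isProbabilityMeasure_gammaMeasure hNpos hNpos
  have hcompl : gammaMeasure (N:ℝ) (N:ℝ) (Ioi z)
      = 1 - gammaMeasure (N:ℝ) (N:ℝ) (Iic z) := by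
    rw [← compl_Iic, prob_compl_eq_one_sub measurableSet_Iic]
  rw [hcompl]
  have hB0 : 0 ≤ (1 - Real.exp (-((N:ℝ)*z)))^N := by
    have : Real.exp (-((N:ℝ)*z)) ≤ 1 := Real.exp_le_one_iff.mpr (neg_nonpos.mpr (by positivity))
    exact pow_nonneg (by linarith) N
  calc ENNReal.ofReal (1 - (1 - Real.exp (-((N:ℝ) * z)))^N)
      = 1 - ENNReal.ofReal ((1 - Real.exp (-((N:ℝ) * z)))^N) := by
        rw [ENNReal.ofReal_sub _ hB0, ENNReal.ofReal_one]
    _ ≤ 1 - gammaMeasure (N:ℝ) (N:ℝ) (Iic z) :=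
        tsub_le_tsub_left (gamma_Iic_le N hN hz) 1

private lemma alt_sum_eq (N : ℕ) (u : ℝ) :
    ∑ n ∈ Finset.Icc 1 N, (-1:ℝ)^(n+1) * (N.choose n : ℝ) * Real.exp (-(n*u))
      = 1 - (1 - Real.exp (-u))^N := by
  have hbin : (1 - Real.exp (-u))^N
      = ∑ k ∈ Finset.range (N+1), (-Real.exp (-u))^k * (N.choose k : ℝ) := by
    calc (1 - Real.exp (-u))^N = (-Real.exp (-u) + 1)^N := by ring
      _ = ∑ k ∈ Finset.range (N+1),
            (-Real.exp (-u))^k * 1^(N-k) * (N.choose k : ℝ) := add_pow _ _ _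
      _ = _ := by simp
  have hIcc : Finset.range (N+1) = insert 0 (Finset.Icc 1 N) := by
    ext k
    simp only [Finset.mem_range, Finset.mem_insert, Finset.mem_Icc]
    omega
  rw [hbin, hIcc, Finset.sum_insert (by simp)]
  simp only [pow_zero, one_mul, Nat.choose_zero_right, Nat.cast_one]
  rw [← sub_sub, sub_self, zero_sub, ← Finset.sum_neg_distrib]
  apply Finset.sum_congr rfl
  intro n hn
  have hE : (-Real.exp (-u))^n = (-1:ℝ)^n * Real.exp ((n:ℝ) * -u) := by
    rw [neg_pow, ← Real.exp_nat_mul]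
  rw [hE, show (n:ℝ) * -u = -((n:ℝ)*u) by ring]
  ring

end AuxScalar

/-- **Alternating-sum lower bound on the Gamma-smoothed interference CDF.**
Let `I` be a nonnegative random variable, `τ > 0`, `N` a positive integer, and
let `g` be a normalized-Gamma(`N`) random variable independent of `I`.  Then
`P(I < τ·g) ≥ Σ_{n=1}^{N} (−1)^{n+1} · binom(N, n) · E[exp(−N n I / τ)]`. -/
theorem smoothed_cdf_lower_bound
    {Ω : Type*} [MeasurableSpace Ω] (P : Measure Ω) [IsProbabilityMeasure P]
    (I g : Ω → ℝ) (hI : Measurable I) (hg : Measurable g)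
    (hI0 : ∀ ω, 0 ≤ I ω)
    (τ : ℝ) (hτ : 0 < τ) (N : ℕ) (hN : 0 < N)
    (hlaw : Measure.map g P = gammaMeasure (N : ℝ) (N : ℝ))
    (hindep : IndepFun I g P) :
    ∑ n ∈ Finset.Icc 1 N, (-1 : ℝ) ^ (n + 1) * (N.choose n : ℝ) *
        ∫ ω, Real.exp (-((N : ℝ) * n * I ω) / τ) ∂P
      ≤ (P {ω | I ω < τ * g ω}).toReal := by
  have hNpos : (0:ℝ) < N := by exact_mod_cast hN
  set μ := gammaMeasure (N:ℝ) (N:ℝ) with hμ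
  have hprob : IsProbabilityMeasure μ := isProbabilityMeasure_gammaMeasure hNpos hNpos
  -- the alternating-sum function
  set h : ℝ → ℝ := fun x => ∑ n ∈ Finset.Icc 1 N,
    (-1:ℝ)^(n+1) * (N.choose n : ℝ) * Real.exp (-((N:ℝ)*n*x)/τ) with hhdef
  have hh_eq : ∀ x : ℝ, h x = 1 - (1 - Real.exp (-((N:ℝ)*(x/τ))))^N := by
    intro x
    rw [hhdef, ← alt_sum_eq N ((N:ℝ)*(x/τ))]
    apply Finset.sum_congr rfl
    intro n _
    congr 1
    apply congrArg Real.exp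
    field_simp
  -- integrability of each term
  have hint : ∀ n ∈ Finset.Icc 1 N, Integrable
      (fun ω => (-1:ℝ)^(n+1) * (N.choose n : ℝ) * Real.exp (-((N:ℝ)*n*I ω)/τ)) P := by
    intro n _
    apply Integrable.const_mul
    apply MeasureTheory.Integrable.mono' (integrable_const (1:ℝ))
    · exact ((hI.const_mul _).neg.div_const τ).exp.aestronglyMeasurable
    · filter_upwards with ω
      rw [Real.norm_eq_abs, abs_of_pos (Real.exp_pos _)]
      apply Real.exp_le_one_iff.mpr
      have := hI0 ω
      have hnn : 0 ≤ (N:ℝ)*n*I ω := by positivity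
      exact div_nonpos_of_nonpos_of_nonneg (by linarith) hτ.le
  -- LHS = ∫ h ∘ I
  have hLHS : ∑ n ∈ Finset.Icc 1 N, (-1 : ℝ) ^ (n + 1) * (N.choose n : ℝ) *
        (∫ ω, Real.exp (-((N : ℝ) * n * I ω) / τ) ∂P)
      = ∫ ω, h (I ω) ∂P := by
    rw [hhdef]
    rw [integral_finset_sum _ hint]
    apply Finset.sum_congr rfl
    intro n _
    rw [integral_const_mul]
  -- nonnegativity of h ∘ I
  have hh_nonneg : ∀ ω, 0 ≤ h (I ω) := by
    intro ω
    rw [hh_eq]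
    have h1 : Real.exp (-((N:ℝ)*(I ω/τ))) ≤ 1 := by
      apply Real.exp_le_one_iff.mpr
      have := hI0 ω
      have : 0 ≤ (N:ℝ)*(I ω/τ) := by positivity
      linarith
    have h2 : (1 - Real.exp (-((N:ℝ)*(I ω/τ))))^N ≤ 1 :=
      pow_le_one₀ (by linarith) (by linarith [Real.exp_pos (-((N:ℝ)*(I ω/τ)))])
    linarith
  -- measurability of h ∘ I
  have hh_meas : Measurable (fun ω => h (I ω)) := by
    rw [hhdef]
    apply Finset.measurable_sum
    intro n _
    exact (((hI.const_mul _).neg.div_const τ).exp.const_mul _)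
  -- identify the probability as a lintegral
  have hs_meas : MeasurableSet {p : ℝ × ℝ | p.1 < τ * p.2} :=
    measurableSet_lt measurable_fst (measurable_snd.const_mul τ)
  have hmap : Measure.map (fun ω => (I ω, g ω)) P = (Measure.map I P).prod μ := by
    rw [← hlaw]
    exact (indepFun_iff_map_prod_eq_prod_map_map hI.aemeasurable hg.aemeasurable).mp hindep
  have hPset : P {ω | I ω < τ * g ω}
      = ∫⁻ x, μ (Ioi (x/τ)) ∂(Measure.map I P) := by
    have h1 : P {ω | I ω < τ * g ω}
        = Measure.map (fun ω => (I ω, g ω)) P {p : ℝ × ℝ | p.1 < τ * p.2} := by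
      rw [Measure.map_apply (hI.prodMk hg) hs_meas]
      rfl
    rw [h1, hmap, Measure.prod_apply hs_meas]
    congr 1
    ext x
    congr 1
    ext y
    simp only [mem_preimage, mem_setOf_eq, mem_Ioi]
    rw [div_lt_iff₀ hτ]  -- x/τ < y ↔ x < y * τ
    constructor
    · intro hxy; linarith [hxy]
    · intro hxy; linarith [hxy]
  -- pointwise bound and lintegral comparison
  have hpt : ∀ ω, ENNReal.ofReal (h (I ω)) ≤ μ (Ioi (I ω / τ)) := by
    intro ω
    rw [hh_eq]
    have hz : 0 ≤ I ω / τ := div_nonneg (hI0 ω) hτ.le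
    exact gamma_Ioi_ge N hN hz
  have hmeas_slice : Measurable (fun x : ℝ => μ (Ioi (x/τ))) := by
    apply Antitone.measurable
    intro a b hab
    exact measure_mono (Ioi_subset_Ioi (by gcongr))
  calc ∑ n ∈ Finset.Icc 1 N, (-1 : ℝ) ^ (n + 1) * (N.choose n : ℝ) *
        (∫ ω, Real.exp (-((N : ℝ) * n * I ω) / τ) ∂P)
      = ∫ ω, h (I ω) ∂P := hLHS
    _ = (∫⁻ ω, ENNReal.ofReal (h (I ω)) ∂P).toReal :=
        integral_eq_lintegral_of_nonneg_ae (Filter.Eventually.of_forall hh_nonneg)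
          hh_meas.aestronglyMeasurable
    _ ≤ (P {ω | I ω < τ * g ω}).toReal := by
        apply ENNReal.toReal_mono (measure_ne_top P _)
        calc ∫⁻ ω, ENNReal.ofReal (h (I ω)) ∂P
            ≤ ∫⁻ ω, μ (Ioi (I ω / τ)) ∂P := lintegral_mono hpt
          _ = ∫⁻ x, μ (Ioi (x/τ)) ∂(Measure.map I P) := (lintegral_map hmeas_slice hI).symm
          _ = P {ω | I ω < τ * g ω} := hPset.symm
end
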